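/- arXiv:1611.00975 — 5 statements merged into one kernel-verified Lean document; each statement's English description precedes it below -/
import Mathlib

section
/- Let ℱ be a set of Boolean signatures and let f ∈ 𝒮(ℱ) have arity n ≥ 1. Then the pointwise square f², defined by f²(x) = (f(x))², belongs to W_ℱ. -/
open scoped BigOperators

/-- A Boolean signature: a function `{0,1}^n → ℂ` together with its arity `n`. -/
abbrev BSig := Σ n : ℕ, (Fin n → Bool) → ℂ

/-- A signature is non-negative if all its values are non-negative reals. -/
def SigNonneg (f : BSig) : Prop := ∀ x, 0 ≤ (f.2 x).re ∧ (f.2 x).im = 0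

/-- A matrix (with non-negative real entries) is block-rank-one if any two of its rows
are linearly dependent or orthogonal. -/
def BlockRankOne {α β R : Type*} [CommRing R] [Fintype β] (M : α → β → R) : Prop :=
  ∀ a₁ a₂ : α,
    (∃ c : R, (∀ b, M a₁ b = c * M a₂ b) ∨ (∀ b, M a₂ b = c * M a₁ b)) ∨
      (∑ b, M a₁ b * M a₂ b) = 0

/-- The signature matrix `M_[r](f)` of a signature of arity `n = r + s`:
rows indexed by `{0,1}^r`, columns by `{0,1}^s`. -/
def sigMatrix {n r s : ℕ} (h : r + s = n) (f : (Fin n → Bool) → ℂ) :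
    (Fin r → Bool) → (Fin s → Bool) → ℂ :=
  fun x y => f fun i => Fin.append x y (Fin.cast h.symm i)

/-- A non-negative signature of arity `n` is block-rank-one if `n = 1` or `M_[n-1](f)`
is block-rank-one. -/
def SigBlockRankOne (f : BSig) : Prop :=
  f.1 = 1 ∨ ∀ (r : ℕ) (h : r + 1 = f.1), BlockRankOne (sigMatrix h f.2)

/-- `𝒮(ℱ)`: the smallest set of signatures containing `ℱ` and closed under tensor
product, permutation of inputs, and contraction of the first two inputs. -/
inductive Realizable (F : Set BSig) : BSig → Prop
  | base (f : BSig) : f ∈ F → Realizable F f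
  | tensor {r s : ℕ} (f : (Fin r → Bool) → ℂ) (g : (Fin s → Bool) → ℂ) :
      Realizable F ⟨r, f⟩ → Realizable F ⟨s, g⟩ →
      Realizable F ⟨r + s, fun x =>
        f (fun i => x (Fin.castAdd s i)) * g (fun j => x (Fin.natAdd r j))⟩
  | perm {n : ℕ} (f : (Fin n → Bool) → ℂ) (π : Equiv.Perm (Fin n)) :
      Realizable F ⟨n, f⟩ → Realizable F ⟨n, fun x => f (x ∘ π)⟩
  | contract {m : ℕ} (f : (Fin (m + 2) → Bool) → ℂ) :
      Realizable F ⟨m + 2, f⟩ →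
      Realizable F ⟨m, fun x => ∑ y : Bool, f (Fin.cons y (Fin.cons y x))⟩

/-- Finite tensor products `f₁ ⊗ ⋯ ⊗ f_k` of members of `ℱ` (`k ≥ 1`). -/
inductive TensorProd (F : Set BSig) : BSig → Prop
  | base (f : BSig) : f ∈ F → TensorProd F f
  | tensor {r s : ℕ} (f : (Fin r → Bool) → ℂ) (g : (Fin s → Bool) → ℂ) :
      TensorProd F ⟨r, f⟩ → TensorProd F ⟨s, g⟩ →
      TensorProd F ⟨r + s, fun x =>
        f (fun i => x (Fin.castAdd s i)) * g (fun j => x (Fin.natAdd r j))⟩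

/-- The duplicated assignment `(x₁,x₁,x₂,x₂,…,x_n,x_n)`. -/
def dup {n : ℕ} (x : Fin n → Bool) : Fin (2 * n) → Bool :=
  fun i => x ⟨i.1 / 2, by have := i.2; omega⟩

/-- A signature `G` of arity `n` is defined by an instance of `Holant(ℱ)` if
`G(x) = (f₁⊗⋯⊗f_k)_π(x₁,x₁,…,x_n,x_n)` for some `f₁,…,f_k ∈ ℱ` of total arity `2n`
and some permutation `π` of `[2n]`. -/
def DefinedByHolant (F : Set BSig) {n : ℕ} (G : (Fin n → Bool) → ℂ) : Prop :=
  ∃ (g : (Fin (2 * n) → Bool) → ℂ) (π : Equiv.Perm (Fin (2 * n))),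
    TensorProd F ⟨2 * n, g⟩ ∧ ∀ x, G x = g fun i => dup x (π i)

/-- `W_ℱ`: all `F^[t]` where `F` is defined by an instance of `Holant(ℱ)`,
`1 ≤ t ≤ arity(F)`. -/
def InW (F : Set BSig) (f : BSig) : Prop :=
  ∃ (t s : ℕ) (G : (Fin (t + s) → Bool) → ℂ),
    DefinedByHolant F G ∧ 1 ≤ t ∧
      f = ⟨t, fun x => ∑ y : Fin s → Bool, G (Fin.append x y)⟩

/-- `ℱ` satisfies the Block-rank-one condition: every signature in `W_ℱ`
is block-rank-one. -/
def BlockRankOneCond (F : Set BSig) : Prop := ∀ f, InW F f → SigBlockRankOne f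

/-- `ℱ` is balanced: for every `f ∈ 𝒮(ℱ)` of arity `n` and every `1 ≤ r ≤ n`,
the matrix `M_[r](f)` is block-rank-one. -/
def SigSetBalanced (F : Set BSig) : Prop :=
  ∀ f, Realizable F f → ∀ (r s : ℕ) (h : r + s = f.1), 1 ≤ r →
    BlockRankOne (sigMatrix h f.2)

/-- Pure affine signatures: identically zero, or constant `λ > 0` on the solution set
of a system of `𝔽₂`-linear equations and zero elsewhere. -/
def PureAffine {n : ℕ} (f : (Fin n → Bool) → ℂ) : Prop :=
  (∀ x, f x = 0) ∨
    ∃ lam : ℝ, 0 < lam ∧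
      ∃ (k : ℕ) (A : Matrix (Fin k) (Fin n) (ZMod 2)) (b : Fin k → ZMod 2),
        ∀ x : Fin n → Bool,
          (A.mulVec (fun i => if x i then 1 else 0) = b → f x = lam) ∧
          (A.mulVec (fun i => if x i then 1 else 0) ≠ b → f x = 0)

/-- The allowed factors of a product-type signature: a unary function applied to one
coordinate, the indicator of `xᵢ = xⱼ`, or the indicator of `xᵢ ≠ xⱼ`. -/
inductive ProdAtom (n : ℕ) : ((Fin n → Bool) → ℂ) → Prop
  | unary (u : Bool → ℂ) (i : Fin n) : ProdAtom n (fun x => u (x i))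
  | eq (i j : Fin n) : ProdAtom n (fun x => if x i = x j then 1 else 0)
  | ne (i j : Fin n) : ProdAtom n (fun x => if x i = x j then 0 else 1)

/-- Product-type signatures: finite products of the allowed factors. -/
def ProductType {n : ℕ} (f : (Fin n → Bool) → ℂ) : Prop :=
  ∃ (k : ℕ) (g : Fin k → (Fin n → Bool) → ℂ),
    (∀ i, ProdAtom n (g i)) ∧ ∀ x, f x = ∏ i, g i x

def pad {n m : ℕ} (x : Fin n → Bool) (y : Fin m → Bool) : Fin (n + 2*m) → Bool :=
  fun i => if h : i.1 < n then x ⟨i.1, h⟩ else y ⟨(i.1 - n)/2, by have := i.2; omega⟩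

lemma tensorProd_cast {F : Set BSig} {a b : ℕ} (h : a = b) {g : (Fin a → Bool) → ℂ}
    (hg : TensorProd F ⟨a, g⟩) :
    TensorProd F ⟨b, fun x => g (fun i => x (Fin.cast h i))⟩ := by
  subst h; exact hg

def splitE (a b : ℕ) : ((Fin a → Bool) × (Fin b → Bool)) ≃ (Fin (a+b) → Bool) where
  toFun p := fun j => if h : j.1 < a then p.1 ⟨j.1, h⟩ else p.2 ⟨j.1 - a, by have := j.2; omega⟩
  invFun z := (fun i => z ⟨i.1, by omega⟩, fun i => z ⟨a + i.1, by omega⟩)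
  left_inv p := by
    obtain ⟨u, v⟩ := p
    simp only [Prod.mk.injEq]
    constructor
    · funext i; exact dif_pos i.2
    · funext i
      rw [dif_neg (by omega)]
      congr 1; ext; simp
  right_inv z := by
    funext j
    dsimp only
    by_cases h : j.1 < a
    · rw [dif_pos h]
    · rw [dif_neg h]; congr 1; ext; simp; omega

def boolE (m : ℕ) : (Bool × (Fin m → Bool)) ≃ (Fin (m+1) → Bool) where
  toFun p := fun j => if h : j.1 = 0 then p.1 else p.2 ⟨j.1 - 1, by have := j.2; omega⟩
  invFun z := (z ⟨0, by omega⟩, fun i => z ⟨i.1+1, by have := i.2; omega⟩)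
  left_inv p := by
    obtain ⟨b, v⟩ := p
    simp only [Prod.mk.injEq]
    constructor
    · rfl
    · funext i; rw [dif_neg (by omega)]; congr 1
  right_inv z := by
    funext j
    dsimp only
    by_cases h : j.1 = 0
    · rw [dif_pos h]; congr 1; ext; simp [h]
    · rw [dif_neg h]; congr 1; ext; simp; omega

lemma append_apply {a b : ℕ} {α : Type*} (x : Fin a → α) (w : Fin b → α) (i : Fin (a+b)) :
    Fin.append x w i = if h : i.1 < a then x ⟨i.1, h⟩ else w ⟨i.1 - a, by have := i.2; omega⟩ := by
  cases i using Fin.addCases with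
  | left j =>
    rw [Fin.append_left]
    symm
    exact dif_pos j.2
  | right j =>
    rw [Fin.append_right]
    symm
    rw [dif_neg (by simp)]
    congr 1; ext; simp

lemma cons_cons_apply {m₀ : ℕ} (b : Bool) (x : Fin m₀ → Bool) (j : Fin (m₀+2)) :
    (Fin.cons b (Fin.cons b x) : Fin (m₀+2) → Bool) j = if h : j.1 < 2 then b else x ⟨j.1-2, by have := j.2; omega⟩ := by
  induction j using Fin.cases with
  | zero => simp
  | succ j' =>
    induction j' using Fin.cases with
    | zero => simp
    | succ j'' =>
      simp only [Fin.cons_succ, Fin.val_succ]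
      have hc : ¬ ((j'' : ℕ) + 1 + 1 < 2) := by omega
      rw [dif_neg hc]
      congr 1


/-- extension of a permutation by identity on the padding part -/
def permExtQ (n m : ℕ) (π₀ : Equiv.Perm (Fin n)) : Fin (n+2*m) → Fin (n+2*m) := fun q =>
  if h : q.1 < n then ⟨(π₀ ⟨q.1, h⟩).1, by have := (π₀ ⟨q.1, h⟩).2; omega⟩ else q

noncomputable def mkPerm {N : ℕ} (f : Fin N → Fin N) (hf : Function.Injective f) : Equiv.Perm (Fin N) :=
  Equiv.ofBijective f (Finite.injective_iff_bijective.mp hf)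

@[simp] lemma mkPerm_apply {N : ℕ} (f : Fin N → Fin N) (hf : Function.Injective f) (q : Fin N) :
    mkPerm f hf q = f q := rfl

lemma permExtQ_inj (n m : ℕ) (π₀ : Equiv.Perm (Fin n)) :
    Function.Injective (permExtQ n m π₀) := by
  intro q q' h
  unfold permExtQ at h
  split_ifs at h with h1 h2 h2
  · simp only [Fin.mk.injEq] at h
    have := π₀.injective (Fin.ext h : π₀ ⟨q.1, h1⟩ = π₀ ⟨q'.1, h2⟩)
    have h5 := congrArg Fin.val this
    exact Fin.ext h5
  · exfalso
    have hv : (π₀ ⟨q.1, h1⟩).1 = q'.1 := congrArg Fin.val h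
    have := (π₀ ⟨q.1, h1⟩).2
    omega
  · exfalso
    have hv : q.1 = (π₀ ⟨q'.1, h2⟩).1 := congrArg Fin.val h
    have := (π₀ ⟨q'.1, h2⟩).2
    omega
  · exact h

def d1N (r s : ℕ) (k : ℕ) : ℕ := if k < r then k else k + s
def d2N (r s m₁ : ℕ) (k : ℕ) : ℕ := if k < s then r + k else r + 2*m₁ + k

lemma d1N_lt {r s m₁ : ℕ} (m₂ : ℕ) {k : ℕ} (hk : k < r + 2*m₁) :
    d1N r s k < (r+s) + 2*(m₁+m₂) := by unfold d1N; split_ifs <;> omega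

lemma d2N_lt {r s m₁ : ℕ} (m₂ : ℕ) {k : ℕ} (hk : k < s + 2*m₂) :
    d2N r s m₁ k < (r+s) + 2*(m₁+m₂) := by unfold d2N; split_ifs <;> omega

lemma d1N_inj {r s m₁ k k' : ℕ} (hk : k < r + 2*m₁) (hk' : k' < r + 2*m₁)
    (h : d1N r s k = d1N r s k') : k = k' := by unfold d1N at h; split_ifs at h <;> omega

lemma d2N_inj {r s m₁ m₂ k k' : ℕ} (hk : k < s + 2*m₂) (hk' : k' < s + 2*m₂)
    (h : d2N r s m₁ k = d2N r s m₁ k') : k = k' := by unfold d2N at h; split_ifs at h <;> omega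

lemma d1N_ne_d2N {r s m₁ m₂ k k' : ℕ} (hk : k < r + 2*m₁) (hk' : k' < s + 2*m₂) :
    d1N r s k ≠ d2N r s m₁ k' := by unfold d1N d2N; split_ifs <;> omega

def tensQ (r s m₁ m₂ : ℕ) (π₁ : Equiv.Perm (Fin (r+2*m₁))) (π₂ : Equiv.Perm (Fin (s+2*m₂))) :
    Fin ((r+s)+2*(m₁+m₂)) → Fin ((r+s)+2*(m₁+m₂)) := fun q =>
  if h : q.1 < r + 2*m₁ then
    ⟨d1N r s (π₁ ⟨q.1, h⟩).1, d1N_lt m₂ (π₁ ⟨q.1, h⟩).2⟩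
  else
    let j : Fin (s+2*m₂) := ⟨q.1 - (r+2*m₁), by have := q.2; omega⟩
    ⟨d2N r s m₁ (π₂ j).1, d2N_lt m₂ (π₂ j).2⟩

lemma tensQ_inj (r s m₁ m₂ : ℕ) (π₁ : Equiv.Perm (Fin (r+2*m₁))) (π₂ : Equiv.Perm (Fin (s+2*m₂))) :
    Function.Injective (tensQ r s m₁ m₂ π₁ π₂) := by
  intro q q' h
  unfold tensQ at h
  split_ifs at h with h1 h2 h2
  · simp only [Fin.mk.injEq] at h
    have hkk := d1N_inj (m₁ := m₁) (π₁ ⟨q.1, h1⟩).2 (π₁ ⟨q'.1, h2⟩).2 h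
    have := π₁.injective (Fin.ext hkk)
    have h5 := congrArg Fin.val this
    exact Fin.ext h5
  · exfalso
    simp only [Fin.mk.injEq] at h
    exact d1N_ne_d2N (π₁ ⟨q.1, h1⟩).2 (π₂ _).2 h
  · exfalso
    simp only [Fin.mk.injEq] at h
    exact d1N_ne_d2N (π₁ ⟨q'.1, h2⟩).2 (π₂ _).2 h.symm
  · simp only [Fin.mk.injEq] at h
    have hkk := d2N_inj (π₂ _).2 (π₂ _).2 h
    have := π₂.injective (Fin.ext hkk)
    have hv : q.1 - (r+2*m₁) = q'.1 - (r+2*m₁) := congrArg Fin.val this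
    exact Fin.ext (by omega)

def phiN (m₀ k : ℕ) : ℕ := if k < 2 then m₀ + k else if k < m₀+2 then k - 2 else k

lemma phiN_lt {m₀ m k : ℕ} (hk : k < (m₀+2)+2*m) : phiN m₀ k < m₀ + 2*(m+1) := by
  unfold phiN; split_ifs <;> omega

lemma phiN_inj {m₀ m k k' : ℕ} (hk : k < (m₀+2)+2*m) (hk' : k' < (m₀+2)+2*m)
    (h : phiN m₀ k = phiN m₀ k') : k = k' := by unfold phiN at h; split_ifs at h <;> omega

def conQ (m₀ m : ℕ) (hN : (m₀+2)+2*m = m₀+2*(m+1)) (π : Equiv.Perm (Fin ((m₀+2)+2*m))) :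
    Fin (m₀+2*(m+1)) → Fin (m₀+2*(m+1)) := fun q =>
  ⟨phiN m₀ ((π (Fin.cast hN.symm q)).1), phiN_lt (π (Fin.cast hN.symm q)).2⟩

lemma conQ_inj (m₀ m : ℕ) (hN : (m₀+2)+2*m = m₀+2*(m+1)) (π : Equiv.Perm (Fin ((m₀+2)+2*m))) :
    Function.Injective (conQ m₀ m hN π) := by
  intro q q' h
  unfold conQ at h
  simp only [Fin.mk.injEq] at h
  have hkk := phiN_inj (m := m) (π _).2 (π _).2 h
  have := π.injective (Fin.ext hkk)
  have : (Fin.cast hN.symm q).1 = (Fin.cast hN.symm q').1 := congrArg Fin.val this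
  exact Fin.ext this

lemma pad_lt' {n m : ℕ} (x : Fin n → Bool) (y : Fin m → Bool) (q : Fin (n+2*m)) (h : q.1 < n) :
    pad x y q = x ⟨q.1, h⟩ := dif_pos h

lemma pad_ge' {n m : ℕ} (x : Fin n → Bool) (y : Fin m → Bool) (q : Fin (n+2*m)) (h : ¬ q.1 < n) :
    pad x y q = y ⟨(q.1-n)/2, by have := q.2; omega⟩ := dif_neg h

lemma splitE_lt (a b : ℕ) (y₁ : Fin a → Bool) (y₂ : Fin b → Bool) (q : Fin (a+b)) (h : q.1 < a) :
    splitE a b (y₁, y₂) q = y₁ ⟨q.1, h⟩ := dif_pos h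

lemma splitE_ge (a b : ℕ) (y₁ : Fin a → Bool) (y₂ : Fin b → Bool) (q : Fin (a+b)) (h : ¬ q.1 < a) :
    splitE a b (y₁, y₂) q = y₂ ⟨q.1 - a, by have := q.2; omega⟩ := dif_neg h

lemma boolE_eval0 (m : ℕ) (b : Bool) (y : Fin m → Bool) (q : Fin (m+1)) (h : q.1 = 0) :
    boolE m (b, y) q = b := dif_pos h

lemma boolE_evalS (m : ℕ) (b : Bool) (y : Fin m → Bool) (q : Fin (m+1)) (h : ¬ q.1 = 0) :
    boolE m (b, y) q = y ⟨q.1 - 1, by have := q.2; omega⟩ := dif_neg h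

lemma ccons_lt {m₀ : ℕ} (b : Bool) (x : Fin m₀ → Bool) (q : Fin (m₀+2)) (h : q.1 < 2) :
    (Fin.cons b (Fin.cons b x) : Fin (m₀+2) → Bool) q = b := by
  rw [cons_cons_apply, dif_pos h]

lemma ccons_ge {m₀ : ℕ} (b : Bool) (x : Fin m₀ → Bool) (q : Fin (m₀+2)) (h : ¬ q.1 < 2) :
    (Fin.cons b (Fin.cons b x) : Fin (m₀+2) → Bool) q
      = x ⟨q.1 - 2, by have := q.2; omega⟩ := by
  rw [cons_cons_apply, dif_neg h]

lemma tensQ_left {r s m₁ m₂ : ℕ} (π₁ : Equiv.Perm (Fin (r+2*m₁))) (π₂ : Equiv.Perm (Fin (s+2*m₂)))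
    (i : Fin (r+2*m₁)) (q : Fin ((r+s)+2*(m₁+m₂))) (hq : q.1 = i.1) :
    tensQ r s m₁ m₂ π₁ π₂ q = ⟨d1N r s (π₁ i).1, d1N_lt m₂ (π₁ i).2⟩ := by
  unfold tensQ
  have hlt : q.1 < r+2*m₁ := by have := i.2; omega
  rw [dif_pos hlt]
  have he : (⟨q.1, hlt⟩ : Fin (r+2*m₁)) = i := Fin.ext hq
  simp only [Fin.mk.injEq]
  rw [he]

lemma tensQ_right {r s m₁ m₂ : ℕ} (π₁ : Equiv.Perm (Fin (r+2*m₁))) (π₂ : Equiv.Perm (Fin (s+2*m₂)))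
    (j : Fin (s+2*m₂)) (q : Fin ((r+s)+2*(m₁+m₂))) (hq : q.1 = (r+2*m₁) + j.1) :
    tensQ r s m₁ m₂ π₁ π₂ q = ⟨d2N r s m₁ (π₂ j).1, d2N_lt m₂ (π₂ j).2⟩ := by
  unfold tensQ
  rw [dif_neg (by omega)]
  have he : (⟨q.1 - (r+2*m₁), by have := q.2; omega⟩ : Fin (s+2*m₂)) = j :=
    Fin.ext (show q.1 - (r+2*m₁) = j.1 by omega)
  simp only [Fin.mk.injEq]
  rw [he]

lemma realizable_decomp {F : Set BSig} {p : BSig} (hp : Realizable F p) :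
    ∃ (m : ℕ) (g : (Fin (p.1 + 2*m) → Bool) → ℂ) (π : Equiv.Perm (Fin (p.1 + 2*m))),
      TensorProd F ⟨p.1 + 2*m, g⟩ ∧
      ∀ x : Fin p.1 → Bool, p.2 x = ∑ y : Fin m → Bool, g (fun i => pad x y (π i)) := by
  induction hp with
  | base f hf =>
      refine ⟨0, f.2, Equiv.refl _, TensorProd.base f hf, fun x => ?_⟩
      have hconst : ∀ y : Fin 0 → Bool,
          (f.2 fun i => pad x y ((Equiv.refl (Fin (f.1 + 2*0))) i)) = f.2 x := by
        intro y
        exact (congrArg f.2 (funext fun i =>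
          pad_lt' x y i (show i.1 < f.1 by have := i.2; omega))).symm ▸ rfl
      symm
      exact (Fintype.sum_congr _ _ hconst).trans (by simp)
  | perm f π₀ hR ih =>
      obtain ⟨m, g, π, hT, he⟩ := ih
      rename_i n
      dsimp only at he hT ⊢
      refine ⟨m, g, π.trans (mkPerm (permExtQ _ m π₀) (permExtQ_inj _ m π₀)), hT, fun x => ?_⟩
      rw [he (x ∘ π₀)]
      apply Finset.sum_congr rfl
      intro y _
      congr 1
      funext i
      rw [Equiv.trans_apply, mkPerm_apply]
      generalize π i = K
      by_cases hk : K.1 < n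
      · unfold permExtQ
        rw [dif_pos hk]
        unfold pad
        rw [dif_pos hk, dif_pos (show (π₀ ⟨K.1, hk⟩).1 < n from (π₀ ⟨K.1, hk⟩).2)]
        rfl
      · unfold permExtQ
        rw [dif_neg hk]
        unfold pad
        rw [dif_neg hk, dif_neg hk]
  | tensor f g hfR hgR ihf ihg =>
      obtain ⟨m₁, g₁, π₁, hT₁, he₁⟩ := ihf
      obtain ⟨m₂, g₂, π₂, hT₂, he₂⟩ := ihg
      rename_i r s
      dsimp only at he₁ he₂ hT₁ hT₂ ⊢
      have hrs : (r + 2*m₁) + (s + 2*m₂) = (r+s) + 2*(m₁+m₂) := by ring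
      refine ⟨m₁+m₂,
        fun z => g₁ (fun i => z (Fin.cast hrs (Fin.castAdd (s+2*m₂) i))) *
                 g₂ (fun j => z (Fin.cast hrs (Fin.natAdd (r+2*m₁) j))),
        mkPerm (tensQ r s m₁ m₂ π₁ π₂) (tensQ_inj r s m₁ m₂ π₁ π₂),
        tensorProd_cast hrs (TensorProd.tensor g₁ g₂ hT₁ hT₂), fun x => ?_⟩
      rw [he₁, he₂, Finset.sum_mul_sum,
        ← Equiv.sum_comp (splitE m₁ m₂), Fintype.sum_prod_type]
      apply Finset.sum_congr rfl
      intro y₁ _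
      apply Finset.sum_congr rfl
      intro y₂ _
      dsimp only
      congr 1
      · congr 1
        funext i
        rw [mkPerm_apply, tensQ_left π₁ π₂ i _ rfl]
        generalize π₁ i = K
        obtain ⟨k, hk⟩ := K
        replace hk : k < r + 2*m₁ := hk
        by_cases h1 : k < r
        · rw [pad_lt' _ y₁ _ (show k < r from h1),
            pad_lt' x (splitE m₁ m₂ (y₁, y₂)) _
              (show d1N r s k < r + s by unfold d1N; split_ifs <;> omega)]
          exact congrArg x (Fin.ext (show k = d1N r s k by unfold d1N; rw [if_pos h1]))
        · rw [pad_ge' _ y₁ _ (show ¬ (k < r) from h1),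
            pad_ge' x (splitE m₁ m₂ (y₁, y₂)) _
              (show ¬ (d1N r s k < r + s) by unfold d1N; split_ifs <;> omega)]
          rw [splitE_lt m₁ m₂ y₁ y₂ _
            (show (d1N r s k - (r+s))/2 < m₁ by unfold d1N; split_ifs <;> omega)]
          exact congrArg y₁ (Fin.ext
            (show (k-r)/2 = (d1N r s k - (r+s))/2 by unfold d1N; split_ifs <;> omega))
      · congr 1
        funext j
        rw [mkPerm_apply, tensQ_right π₁ π₂ j _ rfl]
        generalize π₂ j = K
        obtain ⟨k, hk⟩ := K
        replace hk : k < s + 2*m₂ := hk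
        by_cases h1 : k < s
        · rw [pad_lt' _ y₂ _ (show k < s from h1),
            pad_lt' x (splitE m₁ m₂ (y₁, y₂)) _
              (show d2N r s m₁ k < r + s by unfold d2N; split_ifs <;> omega)]
          exact congrArg x (Fin.ext (show r + k = d2N r s m₁ k by unfold d2N; rw [if_pos h1]))
        · rw [pad_ge' _ y₂ _ (show ¬ (k < s) from h1),
            pad_ge' x (splitE m₁ m₂ (y₁, y₂)) _
              (show ¬ (d2N r s m₁ k < r + s) by unfold d2N; split_ifs <;> omega)]
          rw [splitE_ge m₁ m₂ y₁ y₂ _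
            (show ¬ ((d2N r s m₁ k - (r+s))/2 < m₁) by unfold d2N; split_ifs <;> omega)]
          exact congrArg y₂ (Fin.ext
            (show (k-s)/2 = (d2N r s m₁ k - (r+s))/2 - m₁ by unfold d2N; split_ifs <;> omega))
  | contract f hR ih =>
      obtain ⟨m, g, π, hT, he⟩ := ih
      rename_i m₀
      dsimp only at he hT ⊢
      have hN : (m₀+2)+2*m = m₀+2*(m+1) := by ring
      refine ⟨m+1, fun z => g (fun i => z (Fin.cast hN i)),
        mkPerm (conQ m₀ m hN π) (conQ_inj m₀ m hN π),
        tensorProd_cast hN hT, fun x => ?_⟩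
      rw [← Equiv.sum_comp (boolE m), Fintype.sum_prod_type]
      apply Finset.sum_congr rfl
      intro b _
      rw [he]
      apply Finset.sum_congr rfl
      intro y _
      congr 1
      funext i
      show pad (Fin.cons b (Fin.cons b x)) y (π i)
        = pad x (boolE m (b, y)) (mkPerm (conQ m₀ m hN π) (conQ_inj m₀ m hN π) (Fin.cast hN i))
      rw [mkPerm_apply]
      have hcc : conQ m₀ m hN π (Fin.cast hN i) = ⟨phiN m₀ ((π i).1), phiN_lt (π i).2⟩ := rfl
      rw [hcc]
      generalize π i = K
      obtain ⟨k, hk⟩ := K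
      replace hk : k < (m₀+2) + 2*m := hk
      by_cases h1 : k < 2
      · rw [pad_lt' _ y _ (show k < m₀ + 2 by omega),
          ccons_lt b x _ (show k < 2 from h1),
          pad_ge' x (boolE m (b, y)) _
            (show ¬ (phiN m₀ k < m₀) by unfold phiN; split_ifs <;> omega)]
        rw [boolE_eval0 m b y _ (show (phiN m₀ k - m₀)/2 = 0 by unfold phiN; split_ifs <;> omega)]
      · by_cases h2 : k < m₀ + 2
        · rw [pad_lt' _ y _ (show k < m₀ + 2 from h2),
            ccons_ge b x _ (show ¬ (k < 2) from h1),
            pad_lt' x (boolE m (b, y)) _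
              (show phiN m₀ k < m₀ by unfold phiN; split_ifs <;> omega)]
          exact congrArg x (Fin.ext
            (show k - 2 = phiN m₀ k by unfold phiN; split_ifs <;> omega))
        · rw [pad_ge' _ y _ (show ¬ (k < m₀ + 2) from h2),
            pad_ge' x (boolE m (b, y)) _
              (show ¬ (phiN m₀ k < m₀) by unfold phiN; split_ifs <;> omega)]
          rw [boolE_evalS m b y _
            (show ¬ ((phiN m₀ k - m₀)/2 = 0) by unfold phiN; split_ifs <;> omega)]
          exact congrArg y (Fin.ext
            (show (k - (m₀+2))/2 = (phiN m₀ k - m₀)/2 - 1 by unfold phiN; split_ifs <;> omega))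

def tpN (n m : ℕ) (c : Bool) (k : ℕ) : ℕ :=
  if k < n then k else if c then n + m + (k-n)/2 else n + (k-n)/2

lemma tpN_lt {n m k : ℕ} (c : Bool) (hk : k < n + 2*m) : tpN n m c k < n + 2*m := by
  unfold tpN; split_ifs <;> (try omega) <;> simp_all

def tpF (n m : ℕ) (c : Bool) (k : Fin (n+2*m)) : Fin (n+2*m) := ⟨tpN n m c k.1, tpN_lt c k.2⟩

def slotN (n m : ℕ) (c : Bool) (k : ℕ) : ℕ :=
  2 * tpN n m c k + (if k < n then (if c then 1 else 0) else (k-n) % 2)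

lemma slotN_lt {n m k : ℕ} (c : Bool) (hk : k < n + 2*m) : slotN n m c k < 2*(n + 2*m) := by
  unfold slotN tpN; split_ifs <;> omega

lemma slotN_div {n m k : ℕ} (c : Bool) : slotN n m c k / 2 = tpN n m c k := by
  unfold slotN
  have h : (if k < n then (if c then 1 else 0) else (k-n) % 2) < 2 := by split_ifs <;> omega
  omega

lemma slotN_inj {n m k k' : ℕ} {c c' : Bool} (hk : k < n + 2*m) (hk' : k' < n + 2*m)
    (h : slotN n m c k = slotN n m c' k') : c = c' ∧ k = k' := by
  unfold slotN tpN at h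
  cases c <;> cases c' <;> simp only [if_true, if_false, Bool.false_eq_true] at h <;>
    [refine ⟨rfl, ?_⟩; exact absurd h (by split_ifs <;> omega);
     exact absurd h (by split_ifs <;> omega); refine ⟨rfl, ?_⟩] <;>
    (split_ifs at h <;> omega)

def rhoQ (n m : ℕ) (π : Equiv.Perm (Fin (n+2*m))) :
    Fin (2*(n+2*m)) → Fin (2*(n+2*m)) := fun q =>
  if h : q.1 < n + 2*m then
    ⟨slotN n m false ((π ⟨q.1, h⟩).1), slotN_lt false (π ⟨q.1, h⟩).2⟩
  else
    let j : Fin (n+2*m) := ⟨q.1 - (n+2*m), by have := q.2; omega⟩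
    ⟨slotN n m true ((π j).1), slotN_lt true (π j).2⟩

lemma rhoQ_inj (n m : ℕ) (π : Equiv.Perm (Fin (n+2*m))) : Function.Injective (rhoQ n m π) := by
  intro q q' h
  unfold rhoQ at h
  split_ifs at h with h1 h2 h2
  · simp only [Fin.mk.injEq] at h
    obtain ⟨-, hkk⟩ := slotN_inj (π ⟨q.1, h1⟩).2 (π ⟨q'.1, h2⟩).2 h
    have := π.injective (Fin.ext hkk)
    have h5 := congrArg Fin.val this
    exact Fin.ext h5
  · simp only [Fin.mk.injEq] at h
    obtain ⟨hc, -⟩ := slotN_inj (π _).2 (π _).2 h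
    exact absurd hc (by simp)
  · simp only [Fin.mk.injEq] at h
    obtain ⟨hc, -⟩ := slotN_inj (π _).2 (π _).2 h
    exact absurd hc (by simp)
  · simp only [Fin.mk.injEq] at h
    obtain ⟨-, hkk⟩ := slotN_inj (π _).2 (π _).2 h
    have := π.injective (Fin.ext hkk)
    have h5 := congrArg Fin.val this
    have h6 : q.1 - (n+2*m) = q'.1 - (n+2*m) := h5
    exact Fin.ext (show q.1 = q'.1 by omega)

def splitE2 (m : ℕ) : ((Fin m → Bool) × (Fin m → Bool)) ≃ (Fin (2*m) → Bool) where
  toFun p := fun j => if h : j.1 < m then p.1 ⟨j.1, h⟩ else p.2 ⟨j.1 - m, by have := j.2; omega⟩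
  invFun z := (fun i => z ⟨i.1, by have := i.2; omega⟩, fun i => z ⟨m + i.1, by have := i.2; omega⟩)
  left_inv p := by
    obtain ⟨u, v⟩ := p
    simp only [Prod.mk.injEq]
    constructor
    · funext i; exact dif_pos i.2
    · funext i
      rw [dif_neg (by omega)]
      congr 1; ext; simp
  right_inv z := by
    funext j
    dsimp only
    by_cases h : j.1 < m
    · rw [dif_pos h]
    · rw [dif_neg h]; congr 1; ext; simp; omega

lemma splitE2_lt (m : ℕ) (y₁ y₂ : Fin m → Bool) (q : Fin (2*m)) (h : q.1 < m) :
    splitE2 m (y₁, y₂) q = y₁ ⟨q.1, h⟩ := dif_pos h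

lemma splitE2_ge (m : ℕ) (y₁ y₂ : Fin m → Bool) (q : Fin (2*m)) (h : ¬ q.1 < m) :
    splitE2 m (y₁, y₂) q = y₂ ⟨q.1 - m, by have := q.2; omega⟩ := dif_neg h


/-- For `f ∈ 𝒮(ℱ)` of arity `n ≥ 1`, the pointwise square `f²`
belongs to `W_ℱ`. -/
theorem sq_of_realizable_mem_W (F : Set BSig) {n : ℕ} (hn : 1 ≤ n)
    (f : (Fin n → Bool) → ℂ) (hf : Realizable F ⟨n, f⟩) :
    InW F ⟨n, fun x => (f x) ^ 2⟩ := by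
  obtain ⟨m, g, π, hT, he⟩ := realizable_decomp hf
  dsimp only at g π hT he
  have h2 : (n + 2*m) + (n + 2*m) = 2*(n + 2*m) := by ring
  refine ⟨n, 2*m,
    fun z => g (fun i => z (tpF n m false (π i))) * g (fun i => z (tpF n m true (π i))),
    ⟨fun w => g (fun i => w (Fin.cast h2 (Fin.castAdd (n+2*m) i))) *
              g (fun i => w (Fin.cast h2 (Fin.natAdd (n+2*m) i))),
     mkPerm (rhoQ n m π) (rhoQ_inj n m π),
     tensorProd_cast h2 (TensorProd.tensor g g hT hT), ?_⟩, hn, ?_⟩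
  · -- Holant equation
    intro z
    dsimp only
    congr 1
    · congr 1
      funext i
      rw [mkPerm_apply]
      have hq : rhoQ n m π (Fin.cast h2 (Fin.castAdd (n+2*m) i))
          = ⟨slotN n m false ((π i).1), slotN_lt false (π i).2⟩ := by
        unfold rhoQ
        rw [dif_pos (show (Fin.cast h2 (Fin.castAdd (n+2*m) i)).1 < n + 2*m from i.2)]
        have hj : (⟨(Fin.cast h2 (Fin.castAdd (n+2*m) i)).1,
            show (Fin.cast h2 (Fin.castAdd (n+2*m) i)).1 < n+2*m from i.2⟩ : Fin (n+2*m)) = i :=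
          Fin.ext rfl
        simp only [Fin.mk.injEq]
        rw [hj]
      rw [hq]
      show z (tpF n m false (π i)) = z ⟨slotN n m false ((π i).1) / 2, _⟩
      exact congrArg z (Fin.ext (slotN_div false).symm)
    · congr 1
      funext i
      rw [mkPerm_apply]
      have hq : rhoQ n m π (Fin.cast h2 (Fin.natAdd (n+2*m) i))
          = ⟨slotN n m true ((π i).1), slotN_lt true (π i).2⟩ := by
        unfold rhoQ
        rw [dif_neg (show ¬ ((Fin.cast h2 (Fin.natAdd (n+2*m) i)).1 < n + 2*m) by
          have := i.2
          show ¬ ((n+2*m) + i.1 < n + 2*m)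
          omega)]
        have hj : (⟨(Fin.cast h2 (Fin.natAdd (n+2*m) i)).1 - (n+2*m), by
            have := (Fin.cast h2 (Fin.natAdd (n+2*m) i)).2; omega⟩ : Fin (n+2*m)) = i :=
          Fin.ext (show (n+2*m) + i.1 - (n+2*m) = i.1 by omega)
        simp only [Fin.mk.injEq]
        rw [hj]
      rw [hq]
      show z (tpF n m true (π i)) = z ⟨slotN n m true ((π i).1) / 2, _⟩
      exact congrArg z (Fin.ext (slotN_div true).symm)
  · -- sum equation
    apply congrArg (Sigma.mk n)
    funext x
    rw [sq, he, Finset.sum_mul_sum, ← Equiv.sum_comp (splitE2 m), Fintype.sum_prod_type]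
    apply Finset.sum_congr rfl
    intro y₁ _
    apply Finset.sum_congr rfl
    intro y₂ _
    dsimp only
    congr 1
    · congr 1
      funext i
      generalize π i = K
      obtain ⟨k, hk⟩ := K
      replace hk : k < n + 2*m := hk
      show pad x y₁ ⟨k, hk⟩ = Fin.append x (splitE2 m (y₁, y₂)) (tpF n m false ⟨k, hk⟩)
      rw [append_apply]
      by_cases h1 : k < n
      · rw [pad_lt' x y₁ _ (show k < n from h1),
          dif_pos (show (tpF n m false ⟨k, hk⟩).1 < n by
            show tpN n m false k < n
            unfold tpN; split_ifs <;> (try omega) <;> simp_all)]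
        exact congrArg x (Fin.ext (show k = tpN n m false k by unfold tpN; rw [if_pos h1]))
      · rw [pad_ge' x y₁ _ (show ¬ (k < n) from h1),
          dif_neg (show ¬ ((tpF n m false ⟨k, hk⟩).1 < n) by
            show ¬ (tpN n m false k < n)
            unfold tpN; split_ifs <;> (try omega) <;> simp_all)]
        rw [splitE2_lt m y₁ y₂ _ (show (tpF n m false ⟨k, hk⟩).1 - n < m by
            show tpN n m false k - n < m
            unfold tpN; split_ifs <;> (try omega) <;> simp_all)]
        exact congrArg y₁ (Fin.ext
          (show (k-n)/2 = tpN n m false k - n by unfold tpN; split_ifs <;> (try omega) <;> simp_all))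
    · congr 1
      funext i
      generalize π i = K
      obtain ⟨k, hk⟩ := K
      replace hk : k < n + 2*m := hk
      show pad x y₂ ⟨k, hk⟩ = Fin.append x (splitE2 m (y₁, y₂)) (tpF n m true ⟨k, hk⟩)
      rw [append_apply]
      by_cases h1 : k < n
      · rw [pad_lt' x y₂ _ (show k < n from h1),
          dif_pos (show (tpF n m true ⟨k, hk⟩).1 < n by
            show tpN n m true k < n
            unfold tpN; split_ifs <;> (try omega) <;> simp_all)]
        exact congrArg x (Fin.ext (show k = tpN n m true k by unfold tpN; rw [if_pos h1]))
      · rw [pad_ge' x y₂ _ (show ¬ (k < n) from h1),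
          dif_neg (show ¬ ((tpF n m true ⟨k, hk⟩).1 < n) by
            show ¬ (tpN n m true k < n)
            unfold tpN; split_ifs <;> (try omega) <;> simp_all)]
        rw [splitE2_ge m y₁ y₂ _ (show ¬ ((tpF n m true ⟨k, hk⟩).1 - n < m) by
            show ¬ (tpN n m true k - n < m)
            unfold tpN; split_ifs <;> (try omega) <;> simp_all)]
        exact congrArg y₂ (Fin.ext
          (show (k-n)/2 = tpN n m true k - n - m by unfold tpN; split_ifs <;> (try omega) <;> simp_all))
end

section
/- Let ℱ be a set of non-negative Boolean signatures and let g be the ternary signature with g(x_1,x_2,x_3) = 1 if x_1 ⊕ x_2 ⊕ x_3 = 0 and g(x_1,x_2,x_3) = 0 otherwise (the symmetric signature [1,0,1,0]). If ℱ ∪ {g} is balanced, then every signature in ℱ is pure affine. -/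
open scoped BigOperators

/-- The ternary parity signature `[1,0,1,0]`: value `1` iff `x₁ ⊕ x₂ ⊕ x₃ = 0`. -/
def parity3 : BSig := ⟨3, fun x => if xor (x 0) (xor (x 1) (x 2)) = false then 1 else 0⟩

section Aux

open Finset

variable {F : Set BSig}

lemma real_eq {n : ℕ} {f g : (Fin n → Bool) → ℂ} (hr : Realizable F ⟨n, f⟩)
    (h : ∀ x, g x = f x) : Realizable F ⟨n, g⟩ := by
  have hfg : g = f := funext h
  rw [hfg]; exact hr

lemma real_cast {a b : ℕ} (h : a = b) {f : (Fin a → Bool) → ℂ}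
    (hr : Realizable F ⟨a, f⟩) :
    Realizable F ⟨b, fun v => f (fun i => v (Fin.cast h i))⟩ := by
  subst h; exact hr

def par3fn (a b c : Bool) : ℂ := if xor a (xor b c) = false then 1 else 0

def par4fn (a b c d : Bool) : ℂ := if xor a (xor b (xor c d)) = false then 1 else 0

def par4sig : (Fin 4 → Bool) → ℂ := fun w => par4fn (w 0) (w 1) (w 2) (w 3)

lemma par4_real (F : Set BSig) : Realizable (F ∪ {parity3}) ⟨4, par4sig⟩ := by
  have hp : Realizable (F ∪ {parity3}) ⟨3, parity3.2⟩ :=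
    Realizable.base parity3 (Or.inr rfl)
  have ht := Realizable.tensor _ _ hp hp
  have htp := Realizable.perm _ (Equiv.swap (1 : Fin (3+3)) 3) ht
  have hc := Realizable.contract _ htp
  refine real_eq hc ?_
  intro x
  rw [Fintype.sum_bool]
  show par4fn (x 0) (x 1) (x 2) (x 3) =
    par3fn true (x 1) (x 0) * par3fn true (x 2) (x 3) +
    par3fn false (x 1) (x 0) * par3fn false (x 2) (x 3)
  cases h0 : x 0 <;> cases h1 : x 1 <;> cases h2 : x 2 <;> cases h3 : x 3 <;>
    simp [par3fn, par4fn]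

end Aux
section Aux2

open Finset

variable {F : Set BSig}

lemma cons_at0 {α : Type*} {n : ℕ} (a : α) (f : Fin n → α) (h : 0 < n + 1) :
    (Fin.cons a f : Fin (n+1) → α) ⟨0, h⟩ = a := by
  have : (⟨0, h⟩ : Fin (n+1)) = 0 := by ext; simp
  rw [this, Fin.cons_zero]

lemma cons_at {α : Type*} {n : ℕ} (a : α) (f : Fin n → α) (t : ℕ) (h : t + 1 < n + 1) :
    (Fin.cons a f : Fin (n+1) → α) ⟨t+1, h⟩ = f ⟨t, by omega⟩ := by
  have : (⟨t+1, h⟩ : Fin (n+1)) = Fin.succ ⟨t, by omega⟩ := rfl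
  rw [this, Fin.cons_succ]

/-- glue a boolean and a tuple -/
def consEquiv (K : ℕ) : Bool × (Fin K → Bool) ≃ (Fin (K+1) → Bool) where
  toFun p := Fin.cons p.1 p.2
  invFun y := (y 0, fun i => y i.succ)
  left_inv p := by simp
  right_inv y := by
    funext i
    induction i using Fin.cases <;> simp

lemma contractMany (G : Set BSig) : ∀ (K : ℕ) {m N : ℕ} (hN : N = 2*K + m)
    (H : (Fin N → Bool) → ℂ), Realizable G ⟨N, H⟩ →
    Realizable G ⟨m, fun x => ∑ y : Fin K → Bool,
      H (fun i => if h : (i : ℕ) < 2*K then y ⟨i.1/2, by omega⟩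
        else x ⟨i.1 - 2*K, by omega⟩)⟩ := by
  intro K
  induction K with
  | zero =>
    intro m N hN H hr
    have h0 : N = m := by omega
    refine real_eq (real_cast h0 hr) ?_
    intro x
    rw [Fintype.sum_unique]
    congr 1
  | succ K IH =>
    intro m N hN H hr
    have h2 : N = 2*K + m + 2 := by omega
    have hc := Realizable.contract _ (real_cast h2 hr)
    have h4 := IH rfl _ hc
    refine real_eq h4 ?_
    intro x
    rw [← Equiv.sum_comp (consEquiv K), Fintype.sum_prod_type, Finset.sum_comm]
    refine Finset.sum_congr rfl (fun y _ => ?_)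
    refine Finset.sum_congr rfl (fun y0 _ => ?_)
    congr 1
    funext i
    have hiN : (i : ℕ) < 2*K + m + 2 := by omega
    rcases Nat.lt_or_ge (i : ℕ) (2*(K+1)) with hlt | hge
    · rw [dif_pos hlt]
      rcases Nat.lt_or_ge (i : ℕ) 2 with h2' | h2''
      · -- i = 0 or 1 : value y0
        have : (Fin.cast h2 i) = (⟨(i:ℕ), hiN⟩ : Fin (2*K+m+2)) := rfl
        rw [this]
        rcases (show (i:ℕ) = 0 ∨ (i:ℕ) = 1 by omega) with h | h
        · have e1 : (⟨(i:ℕ), hiN⟩ : Fin (2*K+m+2)) = ⟨0, by omega⟩ := Fin.ext h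
          have e2 : (⟨(i:ℕ)/2, by omega⟩ : Fin (K+1)) = ⟨0/2, by omega⟩ := Fin.ext (by simp [h])
          rw [e1, e2]
          rw [cons_at0]
          have : (⟨0/2, by omega⟩ : Fin (K+1)) = 0 := by ext; simp
          rw [this]
          simp [consEquiv]
        · have e1 : (⟨(i:ℕ), hiN⟩ : Fin (2*K+m+2)) = ⟨0+1, by omega⟩ := Fin.ext h
          have e2 : (⟨(i:ℕ)/2, by omega⟩ : Fin (K+1)) = ⟨1/2, by omega⟩ := Fin.ext (by simp [h])
          rw [e1, e2]
          rw [cons_at, cons_at0]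
          have : (⟨1/2, by omega⟩ : Fin (K+1)) = 0 := by ext; simp
          rw [this]
          simp [consEquiv]
      · -- 2 ≤ i < 2K+2 : value y ((i-2)/2)
        obtain ⟨t, ht⟩ : ∃ t, (i : ℕ) = t + 2 := ⟨(i:ℕ) - 2, by omega⟩
        have hcast : (Fin.cast h2 i) = (⟨t+1+1, by omega⟩ : Fin (2*K+m+2)) := by
          ext; simp [ht]
        rw [hcast, cons_at, cons_at]
        have htK : t < 2*K := by omega
        rw [dif_pos htK]
        have hisucc : (⟨(i:ℕ)/2, by omega⟩ : Fin (K+1)) = Fin.succ ⟨t/2, by omega⟩ := by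
          ext; simp only [ht, Fin.val_succ]; omega
        rw [hisucc]
        exact cons_at y0 y (t/2) (by omega)
    · rw [dif_neg (by omega)]
      obtain ⟨t, ht⟩ : ∃ t, (i : ℕ) = t + 2 := ⟨(i:ℕ) - 2, by omega⟩
      have hcast : (Fin.cast h2 i) = (⟨t+1+1, by omega⟩ : Fin (2*K+m+2)) := by
        ext; simp [ht]
      rw [hcast, cons_at, cons_at]
      rw [dif_neg (show ¬ (t < 2*K) by omega)]
      have he : (⟨(i:ℕ) - 2*(K+1), by omega⟩ : Fin m) = (⟨t - 2*K, by omega⟩ : Fin m) := by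
        ext; simp; omega
      rw [he]

end Aux2
section Aux3

open Finset

def toV (nn i : ℕ) : ℕ :=
  if i < 4*nn then
    (if i % 4 = 0 then 2*(i/4)
     else if i % 4 = 1 then 2*nn + 2*(i/4)
     else if i % 4 = 2 then 4*nn + i/4
     else 5*nn + i/4)
  else if i < 5*nn then 2*(i - 4*nn) + 1
  else 2*nn + 2*(i - 5*nn) + 1

def invV (nn p : ℕ) : ℕ :=
  if p < 2*nn then (if p % 2 = 0 then 4*(p/2) else 4*nn + p/2)
  else if p < 4*nn then
    (if (p - 2*nn) % 2 = 0 then 4*((p-2*nn)/2) + 1 else 5*nn + (p-2*nn)/2)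
  else if p < 5*nn then 4*(p - 4*nn) + 2
  else 4*(p - 5*nn) + 3

lemma toV_lt (nn i : ℕ) (h : i < 6*nn) : toV nn i < 6*nn := by
  unfold toV; split_ifs <;> omega

lemma invV_lt (nn p : ℕ) (h : p < 6*nn) : invV nn p < 6*nn := by
  unfold invV; split_ifs <;> omega

lemma invV_toV (nn i : ℕ) (h : i < 6*nn) : invV nn (toV nn i) = i := by
  unfold toV invV; split_ifs <;> omega

lemma toV_invV (nn p : ℕ) (h : p < 6*nn) : toV nn (invV nn p) = p := by
  unfold toV invV; split_ifs <;> omega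

def bigPerm (nn : ℕ) {N : ℕ} (hN : N = 6*nn) : Equiv.Perm (Fin N) where
  toFun i := ⟨toV nn i.1, by have := i.2; have := toV_lt nn i.1 (by omega); omega⟩
  invFun p := ⟨invV nn p.1, by have := p.2; have := invV_lt nn p.1 (by omega); omega⟩
  left_inv i := by
    ext
    exact invV_toV nn i.1 (by have := i.2; omega)
  right_inv p := by
    ext
    exact toV_invV nn p.1 (by have := p.2; omega)

lemma bigPerm_apply (nn : ℕ) {N : ℕ} (hN : N = 6*nn) (i : Fin N) :
    (bigPerm nn hN i : ℕ) = toV nn i.1 := rfl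

lemma par4fn_congr {a1 a2 a3 a4 b1 b2 b3 b4 : Bool} (h1 : a1 = b1) (h2 : a2 = b2)
    (h3 : a3 = b3) (h4 : a4 = b4) : par4fn a1 a2 a3 a4 = par4fn b1 b2 b3 b4 := by
  subst h1; subst h2; subst h3; subst h4; rfl

lemma par4pow (F : Set BSig) (k : ℕ) :
    Realizable (F ∪ {parity3}) ⟨4*k+4, fun w => ∏ j : Fin (k+1),
      par4fn (w ⟨4*j.1, by have := j.2; omega⟩) (w ⟨4*j.1+1, by have := j.2; omega⟩)
        (w ⟨4*j.1+2, by have := j.2; omega⟩) (w ⟨4*j.1+3, by have := j.2; omega⟩)⟩ := by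
  induction k with
  | zero =>
    refine real_eq (par4_real F) ?_
    intro w
    rw [Fin.prod_univ_one]
    rfl
  | succ k IH =>
    have ht := Realizable.tensor _ _ (par4_real F) IH
    have hcst : 4 + (4*k+4) = 4*(k+1)+4 := by omega
    refine real_eq (real_cast hcst ht) ?_
    intro w
    rw [Fin.prod_univ_succ]
    have hw : ∀ (a b : ℕ) (ha : a < 4*(k+1)+4) (hb : b < 4*(k+1)+4), a = b →
        w ⟨a, ha⟩ = w ⟨b, hb⟩ := by
      intro a b ha hb h; congr 1; exact Fin.ext h
    refine congrArg₂ (· * ·) rfl ?_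
    refine Finset.prod_congr rfl (fun j _ => ?_)
    have hj := j.2
    show par4fn (w ⟨4*(j.1+1), by omega⟩) (w ⟨4*(j.1+1)+1, by omega⟩)
        (w ⟨4*(j.1+1)+2, by omega⟩) (w ⟨4*(j.1+1)+3, by omega⟩)
      = par4fn (w ⟨4+4*j.1, by omega⟩) (w ⟨4+(4*j.1+1), by omega⟩)
        (w ⟨4+(4*j.1+2), by omega⟩) (w ⟨4+(4*j.1+3), by omega⟩)
    exact par4fn_congr (hw _ _ _ _ (by omega)) (hw _ _ _ _ (by omega))
      (hw _ _ _ _ (by omega)) (hw _ _ _ _ (by omega))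

end Aux3
section Aux4

open Finset

lemma toV0 (nn j : ℕ) (hj : j < nn) : toV nn (4*j) = 2*j := by
  unfold toV; split_ifs <;> omega
lemma toV1 (nn j : ℕ) (hj : j < nn) : toV nn (4*j+1) = 2*nn+2*j := by
  unfold toV; split_ifs <;> omega
lemma toV2 (nn j : ℕ) (hj : j < nn) : toV nn (4*j+2) = 4*nn+j := by
  unfold toV; split_ifs <;> omega
lemma toV3 (nn j : ℕ) (hj : j < nn) : toV nn (4*j+3) = 5*nn+j := by
  unfold toV; split_ifs <;> omega
lemma toV4 (nn p : ℕ) (hp : p < nn) : toV nn (4*nn+p) = 2*p+1 := by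
  unfold toV; split_ifs <;> omega
lemma toV5 (nn p : ℕ) (hp : p < nn) : toV nn (5*nn+p) = 2*nn+2*p+1 := by
  unfold toV; split_ifs <;> omega

def halvesEquiv (nn : ℕ) : ((Fin nn → Bool) × (Fin nn → Bool)) ≃ (Fin (2*nn) → Bool) where
  toFun p := fun t => if h : t.1 < nn then p.1 ⟨t.1, h⟩ else p.2 ⟨t.1 - nn, by have := t.2; omega⟩
  invFun y := (fun j => y ⟨j.1, by have := j.2; omega⟩, fun j => y ⟨nn + j.1, by have := j.2; omega⟩)
  left_inv p := by
    refine Prod.ext ?_ ?_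
    · funext j
      simp only []
      rw [dif_pos j.2]
    · funext j
      simp only []
      rw [dif_neg (by omega)]
      show p.2 ⟨nn + j.1 - nn, by have := j.2; omega⟩ = p.2 j
      have hj : (⟨nn + j.1 - nn, by have := j.2; omega⟩ : Fin nn) = j :=
        Fin.ext (by simp only [Fin.val_mk]; omega)
      rw [hj]
  right_inv y := by
    funext t
    by_cases h : t.1 < nn
    · simp only []
      rw [dif_pos h]
    · simp only []
      rw [dif_neg h]
      show y ⟨nn + (t.1 - nn), by have := t.2; omega⟩ = y t
      have ht : (⟨nn + (t.1 - nn), by have := t.2; omega⟩ : Fin (2*nn)) = t :=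
        Fin.ext (by simp only [Fin.val_mk]; omega)
      rw [ht]

lemma halves_left (nn : ℕ) (a b : Fin nn → Bool) (t : ℕ) (h2 : t < 2*nn) (ht : t < nn) :
    halvesEquiv nn (a, b) ⟨t, h2⟩ = a ⟨t, ht⟩ := by
  simp only [halvesEquiv, Equiv.coe_fn_mk]
  rw [dif_pos ht]

lemma halves_right (nn : ℕ) (a b : Fin nn → Bool) (t : ℕ) (h2 : nn + t < 2*nn) (ht : t < nn) :
    halvesEquiv nn (a, b) ⟨nn + t, h2⟩ = b ⟨t, ht⟩ := by
  simp only [halvesEquiv, Equiv.coe_fn_mk]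
  rw [dif_neg (by omega)]
  show b ⟨nn + t - nn, by omega⟩ = b ⟨t, ht⟩
  have h' : (⟨nn + t - nn, by omega⟩ : Fin nn) = ⟨t, ht⟩ :=
    Fin.ext (by simp only [Fin.val_mk]; omega)
  rw [h']

def Eread (nn : ℕ) (v : Fin (nn+nn) → Bool) (y : Fin (2*nn) → Bool)
    (e : ℕ) (h6 : e < 6*nn) : Bool :=
  if h : toV nn e < 2*(2*nn) then y ⟨toV nn e / 2, by omega⟩
  else v ⟨toV nn e - 2*(2*nn), by have := toV_lt nn e h6; omega⟩

lemma Eread_y (nn : ℕ) (v : Fin (nn+nn) → Bool) (y : Fin (2*nn) → Bool)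
    (e q : ℕ) (h6 : e < 6*nn) (hq : q < 2*nn)
    (h1 : toV nn e < 2*(2*nn)) (h2 : toV nn e / 2 = q) :
    Eread nn v y e h6 = y ⟨q, hq⟩ := by
  unfold Eread
  rw [dif_pos h1]
  congr 1
  exact Fin.ext h2

lemma Eread_v (nn : ℕ) (v : Fin (nn+nn) → Bool) (y : Fin (2*nn) → Bool)
    (e q : ℕ) (h6 : e < 6*nn) (hq : q < nn+nn)
    (h1 : ¬ (toV nn e < 2*(2*nn))) (h2 : toV nn e - 2*(2*nn) = q) :
    Eread nn v y e h6 = v ⟨q, hq⟩ := by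
  unfold Eread
  rw [dif_neg h1]
  congr 1
  exact Fin.ext h2

lemma Rconstruct (F : Set BSig) (k : ℕ) (f : (Fin (k+1) → Bool) → ℂ)
    (hf : Realizable (F ∪ {parity3}) ⟨k+1, f⟩) :
    Realizable (F ∪ {parity3}) ⟨(k+1) + (k+1), fun v =>
      ∑ a : Fin (k+1) → Bool, ∑ b : Fin (k+1) → Bool,
        f a * f b * ∏ j : Fin (k+1),
          par4fn (a j) (b j) (v (Fin.castAdd (k+1) j)) (v (Fin.natAdd (k+1) j))⟩ := by
  have ht := Realizable.tensor _ _ (par4pow F k) hf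
  have ht2 := Realizable.tensor _ _ ht hf
  have hN6 : (4*k+4) + (k+1) + (k+1) = 6*(k+1) := by omega
  have hp := Realizable.perm _ (bigPerm (k+1) hN6) ht2
  have hN2 : (4*k+4) + (k+1) + (k+1) = 2*(2*(k+1)) + ((k+1)+(k+1)) := by omega
  have hcm := contractMany (F ∪ {parity3}) (2*(k+1)) hN2 _ hp
  refine real_eq hcm ?_
  intro v
  show _ = ∑ y : Fin (2*(k+1)) → Bool,
      (∏ j : Fin (k+1),
        par4fn (Eread (k+1) v y (4*j.1) (by have := j.2; omega))
          (Eread (k+1) v y (4*j.1+1) (by have := j.2; omega))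
          (Eread (k+1) v y (4*j.1+2) (by have := j.2; omega))
          (Eread (k+1) v y (4*j.1+3) (by have := j.2; omega)))
      * f (fun p => Eread (k+1) v y ((4*k+4)+p.1) (by have := p.2; omega))
      * f (fun p => Eread (k+1) v y ((4*k+4)+(k+1)+p.1) (by have := p.2; omega))
  rw [← Equiv.sum_comp (halvesEquiv (k+1)), Fintype.sum_prod_type]
  refine Finset.sum_congr rfl fun a _ => Finset.sum_congr rfl fun b _ => ?_
  have hA1 : (fun p : Fin (k+1) => Eread (k+1) v (halvesEquiv (k+1) (a, b))
      ((4*k+4)+p.1) (by have := p.2; omega)) = a := by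
    funext p
    have hto : toV (k+1) ((4*k+4)+p.1) = 2*p.1+1 := by
      have h' : (4*k+4)+p.1 = 4*(k+1)+p.1 := by omega
      rw [h', toV4 (k+1) p.1 p.2]
    rw [Eread_y (k+1) v _ _ p.1 _ (by have := p.2; omega)
      (by rw [hto]; have := p.2; omega) (by rw [hto]; omega)]
    rw [halves_left (k+1) a b p.1 _ p.2]
  have hA2 : (fun p : Fin (k+1) => Eread (k+1) v (halvesEquiv (k+1) (a, b))
      ((4*k+4)+(k+1)+p.1) (by have := p.2; omega)) = b := by
    funext p
    have hto : toV (k+1) ((4*k+4)+(k+1)+p.1) = 2*(k+1)+2*p.1+1 := by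
      have h' : (4*k+4)+(k+1)+p.1 = 5*(k+1)+p.1 := by omega
      rw [h', toV5 (k+1) p.1 p.2]
    rw [Eread_y (k+1) v _ _ ((k+1)+p.1) _ (by have := p.2; omega)
      (by rw [hto]; have := p.2; omega) (by rw [hto]; omega)]
    rw [halves_right (k+1) a b p.1 _ p.2]
  have hprod : (∏ j : Fin (k+1),
        par4fn (Eread (k+1) v (halvesEquiv (k+1) (a, b)) (4*j.1) (by have := j.2; omega))
          (Eread (k+1) v (halvesEquiv (k+1) (a, b)) (4*j.1+1) (by have := j.2; omega))
          (Eread (k+1) v (halvesEquiv (k+1) (a, b)) (4*j.1+2) (by have := j.2; omega))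
          (Eread (k+1) v (halvesEquiv (k+1) (a, b)) (4*j.1+3) (by have := j.2; omega)))
      = ∏ j : Fin (k+1),
          par4fn (a j) (b j) (v (Fin.castAdd (k+1) j)) (v (Fin.natAdd (k+1) j)) := by
    refine Finset.prod_congr rfl fun j _ => ?_
    have hj := j.2
    refine par4fn_congr ?_ ?_ ?_ ?_
    · rw [Eread_y (k+1) v _ _ j.1 _ (by omega)
        (by rw [toV0 (k+1) j.1 j.2]; omega) (by rw [toV0 (k+1) j.1 j.2]; omega)]
      rw [halves_left (k+1) a b j.1 _ j.2]
    · rw [Eread_y (k+1) v _ _ ((k+1)+j.1) _ (by omega)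
        (by rw [toV1 (k+1) j.1 j.2]; omega) (by rw [toV1 (k+1) j.1 j.2]; omega)]
      rw [halves_right (k+1) a b j.1 _ j.2]
    · rw [Eread_v (k+1) v _ _ j.1 _ (by omega)
        (by rw [toV2 (k+1) j.1 j.2]; omega) (by rw [toV2 (k+1) j.1 j.2]; omega)]
      rfl
    · rw [Eread_v (k+1) v _ _ ((k+1)+j.1) _ (by omega)
        (by rw [toV3 (k+1) j.1 j.2]; omega) (by rw [toV3 (k+1) j.1 j.2]; omega)]
      rfl
  rw [hA1, hA2, hprod]
  ring

end Aux4
section Aux5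

open Finset

def xorv {n : ℕ} (p q : Fin n → Bool) : Fin n → Bool := fun i => xor (p i) (q i)

lemma xorv_zl {n : ℕ} (a : Fin n → Bool) : xorv (fun _ => false) a = a :=
  funext fun i => by simp [xorv]

lemma xorv_zr {n : ℕ} (a : Fin n → Bool) : xorv a (fun _ => false) = a :=
  funext fun i => by simp [xorv]

lemma xorv_self {n : ℕ} (a : Fin n → Bool) : xorv a a = (fun _ => false) :=
  funext fun i => by simp [xorv]

lemma xorv_cancel {n : ℕ} (a b : Fin n → Bool) : xorv a (xorv a b) = b :=
  funext fun i => by simp only [xorv]; cases a i <;> cases b i <;> rfl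

lemma xorv_cancel' {n : ℕ} (a b : Fin n → Bool) : xorv a (xorv b a) = b :=
  funext fun i => by simp only [xorv]; cases a i <;> cases b i <;> rfl

lemma xorv_assoc' {n : ℕ} (c p q : Fin n → Bool) :
    xorv c (xorv p q) = xorv (xorv c p) q :=
  funext fun i => by simp only [xorv]; cases c i <;> cases p i <;> cases q i <;> rfl

lemma xorv_cancel_right {n : ℕ} (a d : Fin n → Bool) : xorv (xorv a d) d = a :=
  funext fun i => by simp only [xorv]; cases a i <;> cases d i <;> rfl

def xorPerm {n : ℕ} (d : Fin n → Bool) : Equiv.Perm (Fin n → Bool) :=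
  Function.Involutive.toPerm (fun x => xorv x d) (fun x => xorv_cancel_right x d)

noncomputable def phi {n : ℕ} (g : (Fin n → Bool) → ℝ) (d : Fin n → Bool) : ℝ :=
  ∑ c : Fin n → Bool, g c * g (xorv c d)

lemma periodic_of_brone {n : ℕ} (g : (Fin n → Bool) → ℝ) (hg : ∀ c, 0 ≤ g c)
    (M : (Fin n → Bool) → (Fin n → Bool) → ℂ)
    (hM : ∀ x y, M x y = ((phi g (xorv x y) : ℝ) : ℂ))
    (hb : BlockRankOne M) (s0 : Fin n → Bool) (hs0 : g s0 ≠ 0) :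
    ∀ d, phi g d ≠ 0 → ∀ c, g (xorv c d) = g c := by
  have hphinn : ∀ d, 0 ≤ phi g d :=
    fun d => Finset.sum_nonneg fun c _ => mul_nonneg (hg c) (hg _)
  have hphi0 : 0 < phi g (fun _ => false) := by
    have h1 : g s0 * g (xorv s0 (fun _ => false)) ≤ phi g (fun _ => false) :=
      Finset.single_le_sum (f := fun c => g c * g (xorv c (fun _ => false)))
        (fun c _ => mul_nonneg (hg c) (hg _)) (Finset.mem_univ s0)
    rw [xorv_zr] at h1
    have h0 : 0 < g s0 * g s0 :=
      mul_pos (lt_of_le_of_ne (hg s0) (Ne.symm hs0)) (lt_of_le_of_ne (hg s0) (Ne.symm hs0))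
    linarith
  intro d hd c
  have hdpos : 0 < phi g d := lt_of_le_of_ne (hphinn d) (Ne.symm hd)
  have hphid : phi g d = phi g (fun _ => false) := by
    rcases hb (fun _ => false) d with ⟨cc, hcc | hcc⟩ | horth
    · have h1 := hcc (fun _ => false)
      have h2 := hcc d
      simp only [hM, xorv_zl, xorv_zr, xorv_self] at h1 h2
      -- h1 : ↑φ0 = cc * ↑φd ; h2 : ↑φd = cc * ↑φ0
      have hccne : cc ≠ 0 := by
        intro h0
        rw [h0, zero_mul] at h1
        exact (ne_of_gt hphi0) (by exact_mod_cast h1)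
      have hC : (↑(phi g d) : ℂ) * ↑(phi g d) = ↑(phi g (fun _ => false)) * ↑(phi g (fun _ => false)) := by
        apply mul_left_cancel₀ hccne
        calc cc * ((↑(phi g d) : ℂ) * ↑(phi g d))
            = (cc * ↑(phi g d)) * ↑(phi g d) := by ring
          _ = ↑(phi g (fun _ => false)) * ↑(phi g d) := by rw [← h1]
          _ = (cc * ↑(phi g (fun _ => false))) * ↑(phi g (fun _ => false)) := by
              rw [← h2]; ring
          _ = cc * (↑(phi g (fun _ => false)) * ↑(phi g (fun _ => false))) := by ring
      have hsq : phi g d * phi g d = phi g (fun _ => false) * phi g (fun _ => false) := by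
        exact_mod_cast hC
      rcases mul_self_eq_mul_self_iff.mp hsq with h | h
      · exact h
      · nlinarith
    · have h1 := hcc (fun _ => false)
      have h2 := hcc d
      simp only [hM, xorv_zl, xorv_zr, xorv_self] at h1 h2
      -- h1 : ↑φd = cc * ↑φ0 ; h2 : ↑φ0 = cc * ↑φd
      have hccne : cc ≠ 0 := by
        intro h0
        rw [h0, zero_mul] at h2
        exact (ne_of_gt hphi0) (by exact_mod_cast h2)
      have hC : (↑(phi g d) : ℂ) * ↑(phi g d) = ↑(phi g (fun _ => false)) * ↑(phi g (fun _ => false)) := by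
        apply mul_left_cancel₀ hccne
        calc cc * ((↑(phi g d) : ℂ) * ↑(phi g d))
            = (cc * ↑(phi g d)) * ↑(phi g d) := by ring
          _ = ↑(phi g (fun _ => false)) * ↑(phi g d) := by rw [← h2]
          _ = (cc * ↑(phi g (fun _ => false))) * ↑(phi g (fun _ => false)) := by
              rw [← h1]; ring
          _ = cc * (↑(phi g (fun _ => false)) * ↑(phi g (fun _ => false))) := by ring
      have hsq : phi g d * phi g d = phi g (fun _ => false) * phi g (fun _ => false) := by
        exact_mod_cast hC
      rcases mul_self_eq_mul_self_iff.mp hsq with h | h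
      · exact h
      · nlinarith
    · exfalso
      have hsum : (↑(∑ y : Fin n → Bool, phi g (xorv (fun _ => false) y) * phi g (xorv d y)) : ℂ) = 0 := by
        rw [Complex.ofReal_sum]
        rw [Finset.sum_congr rfl fun y _ =>
          (by rw [hM, hM, Complex.ofReal_mul] :
            ((phi g (xorv (fun _ => false) y) * phi g (xorv d y) : ℝ) : ℂ)
              = M (fun _ => false) y * M d y)]
        exact horth
      have hreal : ∑ y : Fin n → Bool, phi g (xorv (fun _ => false) y) * phi g (xorv d y) = 0 := by
        exact_mod_cast hsum
      have hterm := (Finset.sum_eq_zero_iff_of_nonneg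
        (fun y _ => mul_nonneg (hphinn _) (hphinn _))).mp hreal d (Finset.mem_univ d)
      rw [xorv_zl, xorv_self] at hterm
      exact absurd hterm (ne_of_gt (mul_pos hdpos hphi0))
  -- sum of squares
  have hsq0 : ∑ c' : Fin n → Bool, (g c' - g (xorv c' d))^2 = 0 := by
    have e1 : ∑ c' : Fin n → Bool, g (xorv c' d) * g (xorv c' d)
        = ∑ c' : Fin n → Bool, g c' * g c' :=
      Fintype.sum_equiv (xorPerm d) _ _ (fun c' => rfl)
    have expand : ∀ c' : Fin n → Bool, (g c' - g (xorv c' d))^2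
        = g c' * g c' - 2*(g c' * g (xorv c' d)) + g (xorv c' d) * g (xorv c' d) :=
      fun c' => by ring
    rw [Finset.sum_congr rfl fun c' _ => expand c']
    rw [Finset.sum_add_distrib, Finset.sum_sub_distrib, ← Finset.mul_sum]
    have hphi0eq : phi g (fun _ => false) = ∑ c' : Fin n → Bool, g c' * g c' :=
      Finset.sum_congr rfl fun c' _ => by rw [xorv_zr]
    have hphidef : ∑ c' : Fin n → Bool, g c' * g (xorv c' d) = phi g d := rfl
    rw [e1, hphidef, hphid, hphi0eq]
    ring
  have h1 := (Finset.sum_eq_zero_iff_of_nonneg (fun c' _ => sq_nonneg _)).mp hsq0 c (Finset.mem_univ c)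
  have h2 : g c - g (xorv c d) = 0 := by
    have := pow_eq_zero_iff (n := 2) (by norm_num) |>.mp h1
    exact this
  linarith [h2]

end Aux5
section Aux6

open Finset

def b2z (t : Bool) : ZMod 2 := if t then 1 else 0
def z2b (t : ZMod 2) : Bool := decide (t = 1)
def zv {n : ℕ} (w : Fin n → ZMod 2) : Fin n → Bool := fun i => z2b (w i)

lemma z2b_add : ∀ u v : ZMod 2, z2b (u + v) = xor (z2b u) (z2b v) := by decide
lemma z2b_sub : ∀ u v : ZMod 2, z2b (u - v) = xor (z2b u) (z2b v) := by decide
lemma z2b_b2z : ∀ t : Bool, z2b (b2z t) = t := by decide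
lemma z2b_zero : z2b 0 = false := by decide

lemma zv_add {n : ℕ} (u v : Fin n → ZMod 2) : zv (u + v) = xorv (zv u) (zv v) :=
  funext fun i => z2b_add (u i) (v i)

lemma zv_sub {n : ℕ} (u v : Fin n → ZMod 2) : zv (u - v) = xorv (zv u) (zv v) :=
  funext fun i => z2b_sub (u i) (v i)

lemma zv_zero {n : ℕ} : zv (0 : Fin n → ZMod 2) = fun _ => false :=
  funext fun _ => z2b_zero

lemma zv_b2z {n : ℕ} (x : Fin n → Bool) : zv (fun i => b2z (x i)) = x :=
  funext fun i => z2b_b2z (x i)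

def perSub {n : ℕ} (g : (Fin n → Bool) → ℝ) : Submodule (ZMod 2) (Fin n → ZMod 2) where
  carrier := {w | ∀ c, g (xorv c (zv w)) = g c}
  add_mem' := by
    intro u v hu hv c
    rw [zv_add, xorv_assoc', hv (xorv c (zv u))]
    exact hu c
  zero_mem' := by
    intro c
    rw [zv_zero, xorv_zr]
  smul_mem' := by
    intro m w hw
    have hm : ∀ m : ZMod 2, m = 0 ∨ m = 1 := by decide
    rcases hm m with rfl | rfl
    · rw [zero_smul]
      intro c
      rw [zv_zero, xorv_zr]
    · rw [one_smul]
      exact hw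

lemma mem_perSub {n : ℕ} (g : (Fin n → Bool) → ℝ) (w : Fin n → ZMod 2) :
    w ∈ perSub g ↔ ∀ c, g (xorv c (zv w)) = g c := Iff.rfl

end Aux6
/-- If `ℱ ∪ {[1,0,1,0]}` is balanced, then every signature in `ℱ`
is pure affine. -/
theorem balanced_with_parity_implies_affine (F : Set BSig)
    (hnn : ∀ f ∈ F, SigNonneg f) (hbal : SigSetBalanced (F ∪ {parity3})) :
    ∀ f ∈ F, PureAffine f.2 := by
  intro f hf
  obtain ⟨n, fn⟩ := f
  show PureAffine fn
  have hnnf := hnn _ hf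
  set g : (Fin n → Bool) → ℝ := fun x => (fn x).re with hgdef
  have hfg : ∀ x, fn x = ((g x : ℝ) : ℂ) := by
    intro x
    refine Complex.ext rfl ?_
    rw [Complex.ofReal_im]
    exact (hnnf x).2
  have hgnn : ∀ x, 0 ≤ g x := fun x => (hnnf x).1
  by_cases hzero : ∀ x, fn x = 0
  · exact Or.inl hzero
  push_neg at hzero
  obtain ⟨s0, hs0⟩ := hzero
  have hgs0 : g s0 ≠ 0 := by
    intro h0
    exact hs0 (by rw [hfg s0, h0, Complex.ofReal_zero])
  have hpos : 0 < g s0 := lt_of_le_of_ne (hgnn s0) (Ne.symm hgs0)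
  have hshift : ∀ a b, g a ≠ 0 → g b ≠ 0 → ∀ c, g (xorv c (xorv a b)) = g c := by
    have hper : ∀ d, phi g d ≠ 0 → ∀ c, g (xorv c d) = g c := by
      rcases Nat.eq_zero_or_pos n with hn | hn
      · intro d hd c
        have : xorv c d = c := funext fun i => absurd i.2 (by omega)
        rw [this]
      · obtain ⟨k, hk⟩ : ∃ k, n = k + 1 := ⟨n - 1, by omega⟩
        subst hk
        have hreal : Realizable (F ∪ {parity3}) ⟨k+1, fn⟩ := Realizable.base _ (Or.inl hf)
        have hR := Rconstruct F k fn hreal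
        have hbr := hbal _ hR (k+1) (k+1) rfl (by omega)
        have hM : ∀ x y, sigMatrix (rfl : (k+1)+(k+1) = (k+1)+(k+1))
            (fun v => ∑ a : Fin (k+1) → Bool, ∑ b : Fin (k+1) → Bool,
              fn a * fn b * ∏ j : Fin (k+1),
                par4fn (a j) (b j) (v (Fin.castAdd (k+1) j)) (v (Fin.natAdd (k+1) j)))
            x y = ((phi g (xorv x y) : ℝ) : ℂ) := by
          intro x y
          show (∑ a : Fin (k+1) → Bool, ∑ b : Fin (k+1) → Bool,
              fn a * fn b * ∏ j : Fin (k+1), par4fn (a j) (b j)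
                (Fin.append x y (Fin.castAdd (k+1) j))
                (Fin.append x y (Fin.natAdd (k+1) j))) = _
          simp only [Fin.append_left, Fin.append_right]
          have hind : ∀ a b : Fin (k+1) → Bool,
              (∏ j : Fin (k+1), par4fn (a j) (b j) (x j) (y j))
              = if b = xorv a (xorv x y) then 1 else 0 := by
            intro a b
            by_cases hb : b = xorv a (xorv x y)
            · subst hb
              rw [if_pos rfl]
              apply Finset.prod_eq_one
              intro j _
              simp only [xorv, par4fn]
              have hxor : ∀ u c d : Bool, xor u (xor (xor u (xor c d)) (xor c d)) = false := by
                decide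
              exact if_pos (hxor (a j) (x j) (y j))
            · rw [if_neg hb]
              have hex : ∃ j, b j ≠ xorv a (xorv x y) j := by
                by_contra hcon
                push_neg at hcon
                exact hb (funext hcon)
              obtain ⟨j, hj⟩ := hex
              refine Finset.prod_eq_zero (Finset.mem_univ j) ?_
              simp only [xorv] at hj
              simp only [xorv, par4fn]
              have hxor : ∀ u v c d : Bool, v ≠ xor u (xor c d) →
                  ¬ (xor u (xor v (xor c d)) = false) := by decide
              rw [if_neg (hxor (a j) (b j) (x j) (y j) hj)]
          have hcollapse : ∀ a : Fin (k+1) → Bool,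
              (∑ b : Fin (k+1) → Bool,
                fn a * fn b * ∏ j : Fin (k+1), par4fn (a j) (b j) (x j) (y j))
              = fn a * fn (xorv a (xorv x y)) := by
            intro a
            calc (∑ b : Fin (k+1) → Bool,
                  fn a * fn b * ∏ j : Fin (k+1), par4fn (a j) (b j) (x j) (y j))
                = ∑ b : Fin (k+1) → Bool,
                    (if b = xorv a (xorv x y) then fn a * fn b else 0) := by
                  refine Finset.sum_congr rfl fun b _ => ?_
                  rw [hind a b, mul_ite, mul_one, mul_zero]
              _ = fn a * fn (xorv a (xorv x y)) := Fintype.sum_ite_eq' _ _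
          rw [Finset.sum_congr rfl fun a _ => hcollapse a]
          have hcast : ((phi g (xorv x y) : ℝ) : ℂ)
              = ∑ a : Fin (k+1) → Bool,
                  ((g a : ℝ) : ℂ) * ((g (xorv a (xorv x y)) : ℝ) : ℂ) := by
            unfold phi
            rw [Complex.ofReal_sum]
            exact Finset.sum_congr rfl fun a _ => Complex.ofReal_mul _ _
          rw [hcast]
          exact Finset.sum_congr rfl fun a _ => by rw [hfg, hfg]
        exact periodic_of_brone g hgnn _ hM hbr s0 hgs0
    intro a b ha hb c
    apply hper
    have hterm : g a * g (xorv a (xorv a b)) ≤ phi g (xorv a b) :=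
      Finset.single_le_sum (f := fun c => g c * g (xorv c (xorv a b)))
        (fun c _ => mul_nonneg (hgnn c) (hgnn _)) (Finset.mem_univ a)
    rw [xorv_cancel] at hterm
    have hpos' : 0 < g a * g b :=
      mul_pos (lt_of_le_of_ne (hgnn a) (Ne.symm ha)) (lt_of_le_of_ne (hgnn b) (Ne.symm hb))
    exact ne_of_gt (lt_of_lt_of_le hpos' hterm)
  -- linear algebra packaging
  haveI : Module.Finite (ZMod 2) ((Fin n → ZMod 2) ⧸ perSub g) :=
    Module.Finite.of_surjective (perSub g).mkQ (Submodule.mkQ_surjective _)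
  let bQ := Module.finBasis (ZMod 2) ((Fin n → ZMod 2) ⧸ perSub g)
  let L : (Fin n → ZMod 2) →ₗ[ZMod 2]
      (Fin (Module.finrank (ZMod 2) ((Fin n → ZMod 2) ⧸ perSub g)) → ZMod 2) :=
    (bQ.equivFun.toLinearMap).comp (perSub g).mkQ
  have hkerL : ∀ w, L w = 0 ↔ w ∈ perSub g := by
    intro w
    constructor
    · intro h
      have h1 : bQ.equivFun ((perSub g).mkQ w) = 0 := h
      have h0 : (perSub g).mkQ w = 0 := (LinearEquiv.map_eq_zero_iff bQ.equivFun).mp h1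
      rwa [Submodule.mkQ_apply, Submodule.Quotient.mk_eq_zero] at h0
    · intro h
      have h0 : (perSub g).mkQ w = 0 := by
        rw [Submodule.mkQ_apply, Submodule.Quotient.mk_eq_zero]
        exact h
      show bQ.equivFun ((perSub g).mkQ w) = 0
      rw [h0]
      exact map_zero _
  let A := LinearMap.toMatrix' L
  have hmul : ∀ w, A.mulVec w = L w := by
    intro w
    rw [← Matrix.toLin'_apply, Matrix.toLin'_toMatrix']
  refine Or.inr ⟨g s0, hpos, _, A, A.mulVec (fun i => if s0 i then 1 else 0),
    fun x => ⟨?_, ?_⟩⟩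
  · intro hsolve
    have hv : ((fun i => b2z (x i)) - (fun i => b2z (s0 i))) ∈ perSub g := by
      apply (hkerL _).mp
      rw [map_sub]
      have hx' : L (fun i => b2z (x i)) = L (fun i => b2z (s0 i)) := by
        rw [← hmul, ← hmul]
        exact hsolve
      rw [hx', sub_self]
    have hv' := (mem_perSub g _).mp hv
    simp only [zv_sub, zv_b2z] at hv'
    have h := hv' s0
    rw [xorv_cancel'] at h
    rw [hfg x, h]
  · intro hne
    by_contra hfx
    have hgx : g x ≠ 0 := by
      intro h0
      exact hfx (by rw [hfg x, h0, Complex.ofReal_zero])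
    apply hne
    have hv : ((fun i => b2z (x i)) - (fun i => b2z (s0 i))) ∈ perSub g := by
      rw [mem_perSub]
      simp only [zv_sub, zv_b2z]
      exact hshift x s0 hgx hgs0
    have h0 := (hkerL _).mpr hv
    rw [map_sub, sub_eq_zero] at h0
    show A.mulVec (fun i => if x i then 1 else 0) = A.mulVec (fun i => if s0 i then 1 else 0)
    rw [hmul, hmul]
    exact h0
end

section
/- Let D be a finite set with |D| = d ≥ 2 and let ℱ be a set of non-negative real-valued functions of finite arities on D. If ℱ is weakly balanced, then ℱ is balanced. -/
open scoped BigOperators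

/-- A constraint function on domain `D`: a function `D^k → ℝ` with its arity `k`. -/
abbrev CSig (D : Type*) := Σ k : ℕ, (Fin k → D) → ℝ

/-- `G : D^n → ℝ` is defined by an instance of `#CSP(ℱ)`: there are `m ≥ 1` constraint
functions `F₁,…,F_m ∈ ℱ` with scope maps `σᵢ` such that `G(x) = ∏ᵢ Fᵢ(x ∘ σᵢ)`. -/
def DefinedByCSP {D : Type*} (F : Set (CSig D)) {n : ℕ} (G : (Fin n → D) → ℝ) : Prop :=
  ∃ m : ℕ, 0 < m ∧
    ∃ (k : Fin m → ℕ) (Fs : ∀ i, (Fin (k i) → D) → ℝ) (σ : ∀ i, Fin (k i) → Fin n),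
      (∀ i, (⟨k i, Fs i⟩ : CSig D) ∈ F) ∧ ∀ x, G x = ∏ i, Fs i (x ∘ σ i)

/-- `ℱ` is weakly balanced: for every function `G : D^n → ℝ≥0` (written with
`n = a + 1 + c`, `a ≥ 1`) defined by an instance of `#CSP(ℱ)`, the `d^a × d` matrix
`M(u,v) = Σ_w G(u,v,w)` is block-rank-one. -/
def WeaklyBalancedCSP {D : Type*} [Fintype D] (F : Set (CSig D)) : Prop :=
  ∀ (a c : ℕ), 1 ≤ a → ∀ G : (Fin (a + 1 + c) → D) → ℝ, DefinedByCSP F G →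
    BlockRankOne fun (u : Fin a → D) (v : D) =>
      ∑ w : Fin c → D, G (Fin.append (Fin.append u (fun _ : Fin 1 => v)) w)

/-- `ℱ` is balanced: for every function `G : D^n → ℝ≥0` (written with `n = a + b + c`,
`a, b ≥ 1`) defined by an instance of `#CSP(ℱ)`, the `d^a × d^b` matrix
`M(u,v) = Σ_w G(u,v,w)` is block-rank-one. -/
def BalancedCSP {D : Type*} [Fintype D] (F : Set (CSig D)) : Prop :=
  ∀ (a b c : ℕ), 1 ≤ a → 1 ≤ b → ∀ G : (Fin (a + b + c) → D) → ℝ, DefinedByCSP F G →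
    BlockRankOne fun (u : Fin a → D) (v : Fin b → D) =>
      ∑ w : Fin c → D, G (Fin.append (Fin.append u v) w)

/-! ### Auxiliary machinery -/

section Aux

variable {D : Type*}

/-- CSP-definability over an arbitrary index type of variables. -/
def DefOn (F : Set (CSig D)) (ι : Type) (G : (ι → D) → ℝ) : Prop :=
  ∃ m : ℕ, 0 < m ∧
    ∃ (k : Fin m → ℕ) (Fs : ∀ i, (Fin (k i) → D) → ℝ) (σ : ∀ i, Fin (k i) → ι),
      (∀ i, (⟨k i, Fs i⟩ : CSig D) ∈ F) ∧ ∀ x, G x = ∏ i, Fs i (x ∘ σ i)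

lemma DefOn.reindex {F : Set (CSig D)} {ι J : Type} {G : (ι → D) → ℝ}
    (h : DefOn F ι G) (ρ : ι → J) : DefOn F J (fun x => G (x ∘ ρ)) := by
  obtain ⟨m, hm, k, Fs, σ, hmem, hval⟩ := h
  exact ⟨m, hm, k, Fs, fun i => ρ ∘ σ i, hmem, fun x => hval (x ∘ ρ)⟩

lemma DefOn.mul {F : Set (CSig D)} {ι : Type} {G₁ G₂ : (ι → D) → ℝ}
    (h₁ : DefOn F ι G₁) (h₂ : DefOn F ι G₂) : DefOn F ι (fun x => G₁ x * G₂ x) := by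
  obtain ⟨m₁, hm₁, k₁, Fs₁, σ₁, hmem₁, hval₁⟩ := h₁
  obtain ⟨m₂, hm₂, k₂, Fs₂, σ₂, hmem₂, hval₂⟩ := h₂
  let k : Fin m₁ ⊕ Fin m₂ → ℕ := Sum.elim k₁ k₂
  let Fs : ∀ s, (Fin (k s) → D) → ℝ := fun s =>
    Sum.rec (motive := fun s => (Fin (k s) → D) → ℝ) (fun i => Fs₁ i) (fun j => Fs₂ j) s
  let σ : ∀ s, Fin (k s) → ι := fun s =>
    Sum.rec (motive := fun s => Fin (k s) → ι) (fun i => σ₁ i) (fun j => σ₂ j) s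
  refine ⟨m₁ + m₂, by omega, fun i => k (finSumFinEquiv.symm i),
    fun i => Fs (finSumFinEquiv.symm i), fun i => σ (finSumFinEquiv.symm i), ?_, ?_⟩
  · intro i
    show (⟨k (finSumFinEquiv.symm i), Fs (finSumFinEquiv.symm i)⟩ : CSig D) ∈ F
    rcases hs : finSumFinEquiv.symm i with a | b
    · exact hmem₁ a
    · exact hmem₂ b
  · intro x
    show G₁ x * G₂ x
        = ∏ i : Fin (m₁ + m₂), Fs (finSumFinEquiv.symm i) (x ∘ σ (finSumFinEquiv.symm i))
    rw [hval₁, hval₂]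
    have h1 : (∏ i : Fin (m₁ + m₂), Fs (finSumFinEquiv.symm i) (x ∘ σ (finSumFinEquiv.symm i)))
        = ∏ s : Fin m₁ ⊕ Fin m₂, Fs s (x ∘ σ s) :=
      Equiv.prod_comp finSumFinEquiv.symm (fun s => Fs s (x ∘ σ s))
    rw [h1, Fintype.prod_sum_type]
    rfl

lemma DefOn.nonneg {F : Set (CSig D)} (hnn : ∀ f ∈ F, ∀ x, 0 ≤ f.2 x)
    {ι : Type} {G : (ι → D) → ℝ} (h : DefOn F ι G) : ∀ x, 0 ≤ G x := by
  obtain ⟨m, hm, k, Fs, σ, hmem, hval⟩ := h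
  intro x
  rw [hval]
  exact Finset.prod_nonneg fun i _ => hnn _ (hmem i) _

lemma BlockRankOne.congr {α β : Type*} [Fintype β] {M N : α → β → ℝ}
    (h : BlockRankOne M) (hMN : ∀ a b, M a b = N a b) : BlockRankOne N := by
  have hEq : M = N := funext fun a => funext fun b => hMN a b
  exact hEq ▸ h

lemma BlockRankOne.comp {α β α' β' : Type*} [Fintype β] [Fintype β']
    {M : α → β → ℝ} (h : BlockRankOne M) (e : α' → α) (f : β' ≃ β) :
    BlockRankOne fun a b => M (e a) (f b) := by
  intro a₁ a₂
  rcases h (e a₁) (e a₂) with ⟨c, hc⟩ | h0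
  · exact Or.inl ⟨c, hc.imp (fun hh b => hh (f b)) (fun hh b => hh (f b))⟩
  · right
    calc (∑ b : β', M (e a₁) (f b) * M (e a₂) (f b))
        = ∑ b : β, M (e a₁) b * M (e a₂) b :=
          Equiv.sum_comp f (fun b => M (e a₁) b * M (e a₂) b)
      _ = 0 := h0

/-- The canonical equivalence `(Fin a ⊕ Fin b) ⊕ Fin c ≃ Fin (a + b + c)`. -/
def eee (a b c : ℕ) : ((Fin a ⊕ Fin b) ⊕ Fin c) ≃ Fin (a + b + c) :=
  (Equiv.sumCongr finSumFinEquiv (Equiv.refl (Fin c))).trans finSumFinEquiv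

lemma append_eee {α : Type*} {a b c : ℕ} (u : Fin a → α) (v : Fin b → α) (w : Fin c → α)
    (s : (Fin a ⊕ Fin b) ⊕ Fin c) :
    Fin.append (Fin.append u v) w (eee a b c s) = Sum.elim (Sum.elim u v) w s := by
  rcases s with (i | j) | kk <;>
    simp [eee, Fin.append_left, Fin.append_right]

/-- Precomposition with an equivalence, as an equivalence of function types. -/
def precompEquiv {α β δ : Type*} (e : α ≃ β) : (β → δ) ≃ (α → δ) where
  toFun w := w ∘ e
  invFun w := w ∘ e.symm
  left_inv w := by funext x; simp
  right_inv w := by funext x; simp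

private lemma sum_pos_exists {α : Type*} [Fintype α] {f : α → ℝ}
    (h0 : ∀ a, 0 ≤ f a) (hne : (∑ a, f a) ≠ 0) : ∃ a, 0 < f a := by
  by_contra h
  push_neg at h
  exact hne (Finset.sum_eq_zero fun a _ => le_antisymm (h a) (h0 a))

private lemma pos_of_mul_pos_nonneg {a b : ℝ} (ha : 0 ≤ a) (hb : 0 ≤ b) (hab : 0 < a * b) :
    0 < a ∧ 0 < b := by
  constructor
  · rcases ha.lt_or_eq with h | h
    · exact h
    · rw [← h, zero_mul] at hab; exact absurd hab (lt_irrefl 0)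
  · rcases hb.lt_or_eq with h | h
    · exact h
    · rw [← h, mul_zero] at hab; exact absurd hab (lt_irrefl 0)

/-- The core linear-algebra lemma: if all the `(x,y) × z` slices of a nonnegative
3-tensor are block-rank-one, and the `(x,x̄) × y` Gram-type matrix is block-rank-one,
then the `x × (y,z)` matrix is block-rank-one. -/
lemma coreLemma {X Y Z : Type*} [Fintype Y] [Fintype Z] (M : X → Y → Z → ℝ)
    (hM : ∀ x y z, 0 ≤ M x y z)
    (h1 : BlockRankOne fun (p : X × Y) (z : Z) => M p.1 p.2 z)
    (h2 : BlockRankOne fun (p : X × X) (y : Y) => ∑ z, M p.1 y z * M p.2 y z) :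
    BlockRankOne fun (x : X) (q : Y × Z) => M x q.1 q.2 := by
  intro x₁ x₂
  by_cases h0 : (∑ q : Y × Z, M x₁ q.1 q.2 * M x₂ q.1 q.2) = 0
  · exact Or.inr h0
  left
  set A : Y → ℝ := fun y => ∑ z, M x₁ y z * M x₁ y z with hAdef
  set B : Y → ℝ := fun y => ∑ z, M x₁ y z * M x₂ y z with hBdef
  set C : Y → ℝ := fun y => ∑ z, M x₂ y z * M x₂ y z with hCdef
  have hAnn : ∀ y, 0 ≤ A y := fun y =>
    Finset.sum_nonneg fun z _ => mul_nonneg (hM _ _ _) (hM _ _ _)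
  have hBnn : ∀ y, 0 ≤ B y := fun y =>
    Finset.sum_nonneg fun z _ => mul_nonneg (hM _ _ _) (hM _ _ _)
  have hCnn : ∀ y, 0 ≤ C y := fun y =>
    Finset.sum_nonneg fun z _ => mul_nonneg (hM _ _ _) (hM _ _ _)
  have hBsum : (∑ q : Y × Z, M x₁ q.1 q.2 * M x₂ q.1 q.2) = ∑ y, B y := by
    rw [Fintype.sum_prod_type]
  obtain ⟨y₀, hy₀⟩ : ∃ y, 0 < B y := sum_pos_exists hBnn (by rwa [← hBsum])
  obtain ⟨z₀, hz₀⟩ : ∃ z, 0 < M x₁ y₀ z * M x₂ y₀ z :=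
    sum_pos_exists (fun z => mul_nonneg (hM _ _ _) (hM _ _ _)) (ne_of_gt hy₀)
  obtain ⟨hx₁pos, hx₂pos⟩ := pos_of_mul_pos_nonneg (hM _ _ _) (hM _ _ _) hz₀
  have hAy₀ : 0 < A y₀ := by
    have hle : M x₁ y₀ z₀ * M x₁ y₀ z₀ ≤ A y₀ :=
      Finset.single_le_sum (f := fun z => M x₁ y₀ z * M x₁ y₀ z)
        (fun z _ => mul_nonneg (hM _ _ _) (hM _ _ _)) (Finset.mem_univ z₀)
    exact lt_of_lt_of_le (mul_pos hx₁pos hx₁pos) hle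
  have hCy₀ : 0 < C y₀ := by
    have hle : M x₂ y₀ z₀ * M x₂ y₀ z₀ ≤ C y₀ :=
      Finset.single_le_sum (f := fun z => M x₂ y₀ z * M x₂ y₀ z)
        (fun z _ => mul_nonneg (hM _ _ _) (hM _ _ _)) (Finset.mem_univ z₀)
    exact lt_of_lt_of_le (mul_pos hx₂pos hx₂pos) hle
  -- extract the global proportionality constant β with B = β • A
  have hAB : ∃ β : ℝ, 0 < β ∧ ∀ y, B y = β * A y := by
    rcases h2 (x₁, x₁) (x₁, x₂) with ⟨c, hc | hc⟩ | horth
    · have hc' : ∀ y, A y = c * B y := hc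
      have hcpos : 0 < c := by nlinarith [hc' y₀, hAy₀, hy₀]
      refine ⟨c⁻¹, by positivity, fun y => ?_⟩
      rw [hc' y, inv_mul_cancel_left₀ (ne_of_gt hcpos)]
    · have hc' : ∀ y, B y = c * A y := hc
      have hcpos : 0 < c := by nlinarith [hc' y₀, hAy₀, hy₀]
      exact ⟨c, hcpos, hc'⟩
    · exfalso
      have horth' : (∑ y, A y * B y) = 0 := horth
      have := (Finset.sum_eq_zero_iff_of_nonneg
        (fun y _ => mul_nonneg (hAnn y) (hBnn y))).mp horth' y₀ (Finset.mem_univ _)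
      nlinarith [hAy₀, hy₀]
  -- and γ with B = γ • C
  have hBC : ∃ γ : ℝ, 0 < γ ∧ ∀ y, B y = γ * C y := by
    rcases h2 (x₁, x₂) (x₂, x₂) with ⟨c, hc | hc⟩ | horth
    · have hc' : ∀ y, B y = c * C y := hc
      have hcpos : 0 < c := by nlinarith [hc' y₀, hCy₀, hy₀]
      exact ⟨c, hcpos, hc'⟩
    · have hc' : ∀ y, C y = c * B y := hc
      have hcpos : 0 < c := by nlinarith [hc' y₀, hCy₀, hy₀]
      refine ⟨c⁻¹, by positivity, fun y => ?_⟩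
      rw [hc' y, inv_mul_cancel_left₀ (ne_of_gt hcpos)]
    · exfalso
      have horth' : (∑ y, B y * C y) = 0 := horth
      have := (Finset.sum_eq_zero_iff_of_nonneg
        (fun y _ => mul_nonneg (hBnn y) (hCnn y))).mp horth' y₀ (Finset.mem_univ _)
      nlinarith [hCy₀, hy₀]
  obtain ⟨β, hβpos, hβ⟩ := hAB
  obtain ⟨γ, hγpos, hγ⟩ := hBC
  refine ⟨β⁻¹, Or.inl ?_⟩
  rintro ⟨y, z⟩
  show M x₁ y z = β⁻¹ * M x₂ y z
  by_cases hBy : B y = 0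
  · -- both slices vanish
    have hAy : A y = 0 := by
      have h' := hβ y
      rw [hBy] at h'
      exact (mul_eq_zero.mp h'.symm).resolve_left (ne_of_gt hβpos)
    have hCy : C y = 0 := by
      have h' := hγ y
      rw [hBy] at h'
      exact (mul_eq_zero.mp h'.symm).resolve_left (ne_of_gt hγpos)
    have hz1 : M x₁ y z = 0 := by
      have := (Finset.sum_eq_zero_iff_of_nonneg
        (fun z _ => mul_nonneg (hM x₁ y z) (hM x₁ y z))).mp hAy z (Finset.mem_univ _)
      exact mul_self_eq_zero.mp this
    have hz2 : M x₂ y z = 0 := by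
      have := (Finset.sum_eq_zero_iff_of_nonneg
        (fun z _ => mul_nonneg (hM x₂ y z) (hM x₂ y z))).mp hCy z (Finset.mem_univ _)
      exact mul_self_eq_zero.mp this
    rw [hz1, hz2, mul_zero]
  · have hBypos : 0 < B y := (hBnn y).lt_of_ne (Ne.symm hBy)
    obtain ⟨z', hz'⟩ : ∃ z, 0 < M x₁ y z * M x₂ y z :=
      sum_pos_exists (fun z => mul_nonneg (hM _ _ _) (hM _ _ _)) hBy
    obtain ⟨p1, p2⟩ := pos_of_mul_pos_nonneg (hM _ _ _) (hM _ _ _) hz'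
    rcases h1 (x₁, y) (x₂, y) with ⟨c', hc | hc⟩ | horth
    · -- hc : ∀ z, M x₁ y z = c' * M x₂ y z
      have hc' : ∀ z, M x₁ y z = c' * M x₂ y z := hc
      have hc'pos : 0 < c' := by nlinarith [hc' z', p1, p2]
      have hCypos : 0 < C y := by
        have hle : M x₂ y z' * M x₂ y z' ≤ C y :=
          Finset.single_le_sum (f := fun z => M x₂ y z * M x₂ y z)
            (fun z _ => mul_nonneg (hM _ _ _) (hM _ _ _)) (Finset.mem_univ z')
        exact lt_of_lt_of_le (mul_pos p2 p2) hle
      have hA' : A y = (c' * c') * C y := by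
        show (∑ z, M x₁ y z * M x₁ y z) = _
        rw [hCdef]
        rw [Finset.mul_sum]
        refine Finset.sum_congr rfl fun z _ => ?_
        rw [hc' z]; ring
      have hB' : B y = c' * C y := by
        show (∑ z, M x₁ y z * M x₂ y z) = _
        rw [hCdef]
        rw [Finset.mul_sum]
        refine Finset.sum_congr rfl fun z _ => ?_
        rw [hc' z]; ring
      have hkey : (1 - β * c') * (c' * C y) = 0 := by
        linear_combination hβ y - hB' + β * hA'
      have hfac : (1 : ℝ) - β * c' = 0 := by
        rcases mul_eq_zero.mp hkey with h | h
        · exact h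
        · exact absurd h (ne_of_gt (mul_pos hc'pos hCypos))
      have hcval : c' = β⁻¹ := by
        have hβc : β * c' = 1 := by linarith
        field_simp
        linear_combination hβc
      rw [hc' z, hcval]
    · -- hc : ∀ z, M x₂ y z = c' * M x₁ y z
      have hc' : ∀ z, M x₂ y z = c' * M x₁ y z := hc
      have hc'pos : 0 < c' := by nlinarith [hc' z', p1, p2]
      have hAypos : 0 < A y := by
        have hle : M x₁ y z' * M x₁ y z' ≤ A y :=
          Finset.single_le_sum (f := fun z => M x₁ y z * M x₁ y z)
            (fun z _ => mul_nonneg (hM _ _ _) (hM _ _ _)) (Finset.mem_univ z')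
        exact lt_of_lt_of_le (mul_pos p1 p1) hle
      have hB' : B y = c' * A y := by
        show (∑ z, M x₁ y z * M x₂ y z) = _
        rw [hAdef]
        rw [Finset.mul_sum]
        refine Finset.sum_congr rfl fun z _ => ?_
        rw [hc' z]; ring
      have hceq : c' = β := by
        have h' : c' * A y = β * A y := by rw [← hB']; exact hβ y
        have := mul_right_cancel₀ (ne_of_gt hAypos) h'
        exact this
      rw [hc' z, hceq, inv_mul_cancel_left₀ (ne_of_gt hβpos)]
    · exact absurd horth hBy

end Aux

section Main

variable {D : Type*} [Fintype D]

/-- Weak balance, transported to arbitrary index types (with an arbitrary type `υ`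
marking the single column variable). -/
lemma weakBalance_sum {F : Set (CSig D)} (hwb : WeaklyBalancedCSP F)
    (ι υ γ : Type) [Fintype ι] [Fintype γ] [DecidableEq γ]
    (hι : Nonempty ι) (G : (((ι ⊕ υ) ⊕ γ) → D) → ℝ) (hG : DefOn F ((ι ⊕ υ) ⊕ γ) G) :
    BlockRankOne fun (u : ι → D) (v : D) =>
      ∑ w : γ → D, G (Sum.elim (Sum.elim u fun _ => v) w) := by
  classical
  haveI := hι
  set a := Fintype.card ι with ha_def
  set c := Fintype.card γ with hc_def
  have ha : 1 ≤ a := Fintype.card_pos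
  obtain ⟨eι⟩ : Nonempty (ι ≃ Fin a) := ⟨Fintype.equivFin ι⟩
  obtain ⟨eγ⟩ : Nonempty (γ ≃ Fin c) := ⟨Fintype.equivFin γ⟩
  let φ : ((ι ⊕ υ) ⊕ γ) → Fin (a + 1 + c) :=
    fun s => eee a 1 c (Sum.map (Sum.map eι (fun _ => (0 : Fin 1))) eγ s)
  have hG' : DefinedByCSP F (fun x : Fin (a + 1 + c) → D => G (x ∘ φ)) :=
    hG.reindex φ
  have h := hwb a c ha _ hG'
  -- h : BlockRankOne fun (u : Fin a → D) (v : D) =>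
  --       ∑ w : Fin c → D, G ((Fin.append (Fin.append u (fun _ : Fin 1 => v)) w) ∘ φ)
  have key : ∀ (u : Fin a → D) (v : D) (w : Fin c → D),
      (Fin.append (Fin.append u (fun _ : Fin 1 => v)) w) ∘ φ
        = Sum.elim (Sum.elim (u ∘ eι) (fun _ => v)) (w ∘ eγ) := by
    intro u v w
    funext s
    show Fin.append (Fin.append u (fun _ : Fin 1 => v)) w
        (eee a 1 c (Sum.map (Sum.map eι (fun _ => (0 : Fin 1))) eγ s)) = _
    rw [append_eee]
    rcases s with (i | uu) | g <;> rfl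
  have h2 := h.comp (fun u : ι → D => u ∘ eι.symm) (Equiv.refl D)
  refine h2.congr fun u v => ?_
  show (∑ w : Fin c → D,
      G ((Fin.append (Fin.append (u ∘ eι.symm) (fun _ : Fin 1 => v)) w) ∘ φ)) = _
  have huu : (u ∘ eι.symm) ∘ eι = u := by funext i; simp
  have hstep : (∑ w : Fin c → D,
      G ((Fin.append (Fin.append (u ∘ eι.symm) (fun _ : Fin 1 => v)) w) ∘ φ))
      = ∑ w : Fin c → D, G (Sum.elim (Sum.elim u (fun _ => v)) (w ∘ eγ)) := by
    refine Finset.sum_congr rfl fun w _ => ?_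
    rw [key (u ∘ eι.symm) v w, huu]
  rw [hstep]
  exact Equiv.sum_comp (precompEquiv eγ)
    (fun w : γ → D => G (Sum.elim (Sum.elim u fun _ => v) w))

/-- The inductive step: balance for column block `κ' ⊕ Unit` from balance for
column block `κ'` plus weak balance. -/
lemma stepAux {F : Set (CSig D)} (hnn : ∀ f ∈ F, ∀ x, 0 ≤ f.2 x)
    (hwb : WeaklyBalancedCSP F)
    (ι κ' γ : Type) [Fintype ι] [DecidableEq ι] [Fintype κ'] [DecidableEq κ']
    [Fintype γ] [DecidableEq γ]
    (hι : Nonempty ι) (hκ' : Nonempty κ')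
    (IH : ∀ (ι₂ γ₂ : Type) [Fintype ι₂] [DecidableEq ι₂] [Fintype γ₂] [DecidableEq γ₂],
        Nonempty ι₂ → ∀ G₂ : (((ι₂ ⊕ κ') ⊕ γ₂) → D) → ℝ, DefOn F ((ι₂ ⊕ κ') ⊕ γ₂) G₂ →
        BlockRankOne fun (u : ι₂ → D) (v : κ' → D) =>
          ∑ w : γ₂ → D, G₂ (Sum.elim (Sum.elim u v) w))
    (G : (((ι ⊕ (κ' ⊕ Unit)) ⊕ γ) → D) → ℝ) (hG : DefOn F ((ι ⊕ (κ' ⊕ Unit)) ⊕ γ) G) :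
    BlockRankOne fun (u : ι → D) (v : (κ' ⊕ Unit) → D) =>
      ∑ w : γ → D, G (Sum.elim (Sum.elim u v) w) := by
  classical
  have hGnn : ∀ x, 0 ≤ G x := hG.nonneg hnn
  -- the three-index tensor
  set M : (ι → D) → (κ' → D) → D → ℝ :=
    fun x y z => ∑ w : γ → D, G (Sum.elim (Sum.elim x (Sum.elim y fun _ => z)) w)
    with hMdef
  have hM : ∀ x y z, 0 ≤ M x y z :=
    fun x y z => Finset.sum_nonneg fun w _ => hGnn _
  -- h1 : per-(x,y) weak balance
  have h1 : BlockRankOne fun (p : (ι → D) × (κ' → D)) (z : D) => M p.1 p.2 z := by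
    let ρ₁ : ((ι ⊕ (κ' ⊕ Unit)) ⊕ γ) → (((ι ⊕ κ') ⊕ Unit) ⊕ γ) :=
      Sum.map (⇑(Equiv.sumAssoc ι κ' Unit).symm) id
    have hG₁ : DefOn F (((ι ⊕ κ') ⊕ Unit) ⊕ γ) (fun x => G (x ∘ ρ₁)) := hG.reindex ρ₁
    have hw := weakBalance_sum hwb (ι ⊕ κ') Unit γ ⟨Sum.inl hι.some⟩ _ hG₁
    have hw' := hw.comp (fun p : (ι → D) × (κ' → D) => Sum.elim p.1 p.2) (Equiv.refl D)
    refine hw'.congr fun p z => ?_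
    show (∑ w : γ → D,
        G ((Sum.elim (Sum.elim (Sum.elim p.1 p.2) fun _ => z) w) ∘ ρ₁)) = M p.1 p.2 z
    rw [hMdef]
    refine Finset.sum_congr rfl fun w _ => ?_
    congr 1
    funext s
    rcases s with (i | (kk | uu)) | g <;> rfl
  -- h2 : the doubled instance sharing the column block
  have h2 : BlockRankOne fun (p : (ι → D) × (ι → D)) (y : κ' → D) =>
      ∑ z, M p.1 y z * M p.2 y z := by
    let J := ((ι ⊕ ι) ⊕ κ') ⊕ (Unit ⊕ (γ ⊕ γ))
    let ρA : ((ι ⊕ (κ' ⊕ Unit)) ⊕ γ) → J :=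
      Sum.elim
        (Sum.elim (fun i => Sum.inl (Sum.inl (Sum.inl i)))
          (Sum.elim (fun kk => Sum.inl (Sum.inr kk)) (fun uu => Sum.inr (Sum.inl uu))))
        (fun g => Sum.inr (Sum.inr (Sum.inl g)))
    let ρB : ((ι ⊕ (κ' ⊕ Unit)) ⊕ γ) → J :=
      Sum.elim
        (Sum.elim (fun i => Sum.inl (Sum.inl (Sum.inr i)))
          (Sum.elim (fun kk => Sum.inl (Sum.inr kk)) (fun uu => Sum.inr (Sum.inl uu))))
        (fun g => Sum.inr (Sum.inr (Sum.inr g)))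
    let H : (J → D) → ℝ := fun x => G (x ∘ ρA) * G (x ∘ ρB)
    have hH : DefOn F J H := (hG.reindex ρA).mul (hG.reindex ρB)
    have hIH := IH (ι ⊕ ι) (Unit ⊕ (γ ⊕ γ)) ⟨Sum.inl hι.some⟩ H hH
    -- hIH : BlockRankOne fun (U : ι ⊕ ι → D) (V : κ' → D) =>
    --         ∑ w₂ : (Unit ⊕ (γ ⊕ γ)) → D, H (Sum.elim (Sum.elim U V) w₂)
    have hIH' := hIH.comp (fun p : (ι → D) × (ι → D) => Sum.elim p.1 p.2)
      (Equiv.refl (κ' → D))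
    refine hIH'.congr fun p V => ?_
    -- compute the summed entries
    let E : (D × ((γ → D) × (γ → D))) ≃ ((Unit ⊕ (γ ⊕ γ)) → D) :=
      { toFun := fun q => Sum.elim (fun _ => q.1) (Sum.elim q.2.1 q.2.2)
        invFun := fun w₂ => (w₂ (Sum.inl ()),
          (fun g => w₂ (Sum.inr (Sum.inl g)), fun g => w₂ (Sum.inr (Sum.inr g))))
        left_inv := by rintro ⟨z, w, w'⟩; rfl
        right_inv := by
          intro w₂
          funext s
          rcases s with uu | (g | g)
          · cases uu; rfl
          · rfl
          · rfl }
    show (∑ w₂ : (Unit ⊕ (γ ⊕ γ)) → D,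
        H (Sum.elim (Sum.elim (Sum.elim p.1 p.2) V) w₂)) = ∑ z, M p.1 V z * M p.2 V z
    rw [← Equiv.sum_comp E
      (fun w₂ => H (Sum.elim (Sum.elim (Sum.elim p.1 p.2) V) w₂))]
    rw [Fintype.sum_prod_type]
    refine Finset.sum_congr rfl fun z _ => ?_
    rw [Fintype.sum_prod_type]
    have hterm : ∀ (w w' : γ → D),
        H (Sum.elim (Sum.elim (Sum.elim p.1 p.2) V) (E (z, (w, w'))))
          = G (Sum.elim (Sum.elim p.1 (Sum.elim V fun _ => z)) w)
            * G (Sum.elim (Sum.elim p.2 (Sum.elim V fun _ => z)) w') := by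
      intro w w'
      show G _ * G _ = _
      congr 1
      · congr 1
        funext s; rcases s with (i | (kk | uu)) | g <;> rfl
      · congr 1
        funext s; rcases s with (i | (kk | uu)) | g <;> rfl
    calc (∑ w : γ → D, ∑ w' : γ → D,
            H (Sum.elim (Sum.elim (Sum.elim p.1 p.2) V) (E (z, (w, w')))))
        = ∑ w : γ → D, ∑ w' : γ → D,
            G (Sum.elim (Sum.elim p.1 (Sum.elim V fun _ => z)) w)
              * G (Sum.elim (Sum.elim p.2 (Sum.elim V fun _ => z)) w') := by
          refine Finset.sum_congr rfl fun w _ => Finset.sum_congr rfl fun w' _ => ?_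
          exact hterm w w'
      _ = M p.1 V z * M p.2 V z := by
          rw [hMdef, ← Fintype.sum_mul_sum]
  -- apply the core lemma and transport columns
  have hcore := coreLemma M hM h1 h2
  let fC : ((κ' ⊕ Unit) → D) ≃ ((κ' → D) × D) :=
    { toFun := fun v => (fun kk => v (Sum.inl kk), v (Sum.inr ()))
      invFun := fun q => Sum.elim q.1 (fun _ => q.2)
      left_inv := by
        intro v
        funext s
        rcases s with kk | uu
        · rfl
        · cases uu; rfl
      right_inv := by rintro ⟨y, z⟩; rfl }
  have hfinal := hcore.comp (id : (ι → D) → (ι → D)) fC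
  refine hfinal.congr fun u v => ?_
  show M u (fun kk => v (Sum.inl kk)) (v (Sum.inr ())) = _
  rw [hMdef]
  refine Finset.sum_congr rfl fun w _ => ?_
  congr 1
  funext s
  rcases s with (i | (kk | uu)) | g
  · rfl
  · rfl
  · cases uu; rfl
  · rfl

/-- Auxiliary equivalence `Fin 1 ≃ Unit`. -/
def finOneUnit : Fin 1 ≃ Unit where
  toFun _ := ()
  invFun _ := 0
  left_inv i := Fin.ext (by omega)
  right_inv _ := rfl

/-- Balance in abstract (sum-type) form, by induction on the size of the column block. -/
lemma mainAux {F : Set (CSig D)} (hnn : ∀ f ∈ F, ∀ x, 0 ≤ f.2 x)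
    (hwb : WeaklyBalancedCSP F) :
    ∀ (n : ℕ) (κ : Type) [Fintype κ] [DecidableEq κ], Fintype.card κ = n →
      ∀ (ι γ : Type) [Fintype ι] [DecidableEq ι] [Fintype γ] [DecidableEq γ],
        Nonempty ι → Nonempty κ →
        ∀ G : (((ι ⊕ κ) ⊕ γ) → D) → ℝ, DefOn F ((ι ⊕ κ) ⊕ γ) G →
          BlockRankOne fun (u : ι → D) (v : κ → D) =>
            ∑ w : γ → D, G (Sum.elim (Sum.elim u v) w) := by
  intro n
  induction n with
  | zero =>
    intro κ _ _ hcard ι γ _ _ _ _ hι hκ G hG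
    exfalso
    haveI := hκ
    have := Fintype.card_pos (α := κ)
    omega
  | succ n IHn =>
    intro κ _ _ hcard ι γ _ _ _ _ hι hκ G hG
    rcases Nat.eq_zero_or_pos n with hn | hn
    · -- base case : |κ| = 1
      subst hn
      have hcard1 : Fintype.card κ = 1 := by omega
      haveI : Unique κ := (Fintype.equivFinOfCardEq hcard1).unique
      have h := weakBalance_sum hwb ι κ γ hι G hG
      have h2 := h.comp (id : (ι → D) → (ι → D)) (Equiv.funUnique κ D)
      refine h2.congr fun u v => ?_
      show (∑ w : γ → D, G (Sum.elim (Sum.elim u fun _ => v default) w)) = _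
      have hv : (fun _ : κ => v default) = v :=
        funext fun kk => (congrArg v (Unique.eq_default kk)).symm
      rw [hv]
    · -- step case : |κ| = n + 1 with n ≥ 1
      have e : κ ≃ Fin (n + 1) := Fintype.equivFinOfCardEq hcard
      let e2 : κ ≃ (Fin n ⊕ Unit) :=
        e.trans (finSumFinEquiv.symm.trans
          (Equiv.sumCongr (Equiv.refl (Fin n)) finOneUnit))
      let ρ : ((ι ⊕ κ) ⊕ γ) → ((ι ⊕ (Fin n ⊕ Unit)) ⊕ γ) :=
        Sum.map (Sum.map id e2) id
      have hG' : DefOn F ((ι ⊕ (Fin n ⊕ Unit)) ⊕ γ) (fun x => G (x ∘ ρ)) := hG.reindex ρ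
      have hIH : ∀ (ι₂ γ₂ : Type) [Fintype ι₂] [DecidableEq ι₂]
          [Fintype γ₂] [DecidableEq γ₂],
          Nonempty ι₂ → ∀ G₂ : (((ι₂ ⊕ Fin n) ⊕ γ₂) → D) → ℝ,
            DefOn F ((ι₂ ⊕ Fin n) ⊕ γ₂) G₂ →
            BlockRankOne fun (u : ι₂ → D) (v : Fin n → D) =>
              ∑ w : γ₂ → D, G₂ (Sum.elim (Sum.elim u v) w) := by
        intro ι₂ γ₂ _ _ _ _ hι₂ G₂ hG₂
        exact IHn (Fin n) (Fintype.card_fin n) ι₂ γ₂ hι₂ ⟨⟨0, hn⟩⟩ G₂ hG₂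
      have hstep := stepAux hnn hwb ι (Fin n) γ hι ⟨⟨0, hn⟩⟩ hIH _ hG'
      have h3 := hstep.comp (id : (ι → D) → (ι → D)) (precompEquiv e2.symm)
      refine h3.congr fun u v => ?_
      show (∑ w : γ → D, G ((Sum.elim (Sum.elim u (v ∘ e2.symm)) w) ∘ ρ)) = _
      refine Finset.sum_congr rfl fun w _ => ?_
      congr 1
      funext s
      rcases s with (i | kk) | g
      · rfl
      · show (v ∘ e2.symm) (e2 kk) = v kk
        simp
      · rfl

end Main

/-- Over a finite domain `D` with `|D| = d ≥ 2`, a weakly balanced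
set of non-negative constraint functions is balanced. -/
theorem weaklyBalanced_implies_balanced {D : Type*} [Fintype D]
    (hd : 2 ≤ Fintype.card D) (F : Set (CSig D))
    (hnn : ∀ f ∈ F, ∀ x, 0 ≤ f.2 x) (hwb : WeaklyBalancedCSP F) :
    BalancedCSP F := by
  classical
  intro a b c ha hb G hG
  have hG₀ : DefOn F ((Fin a ⊕ Fin b) ⊕ Fin c)
      (fun x => G (x ∘ (eee a b c).symm)) :=
    DefOn.reindex (ι := Fin (a + b + c)) hG ((eee a b c).symm)
  have h := mainAux hnn hwb b (Fin b) (Fintype.card_fin b) (Fin a) (Fin c)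
    ⟨⟨0, ha⟩⟩ ⟨⟨0, hb⟩⟩ _ hG₀
  refine h.congr fun u v => ?_
  refine Finset.sum_congr rfl fun w _ => ?_
  show G ((Sum.elim (Sum.elim u v) w) ∘ (eee a b c).symm) = G (Fin.append (Fin.append u v) w)
  congr 1
  funext j
  show Sum.elim (Sum.elim u v) w ((eee a b c).symm j) = _
  conv_rhs => rw [show j = eee a b c ((eee a b c).symm j) from (Equiv.apply_symm_apply _ _).symm]
  rw [append_eee]
end

section
/- Let n = 2m+1 be odd and let f : {0,1}^n → ℂ be a signature whose support is exactly {u, ū} for some u ∈ {0,1}^n, where ū denotes the bitwise complement of u. Then there exist an index i ∈ [n] and a partition of [n] ∖ {i} into m pairs {j, k} with u_j = u_k for each pair, such that the unary function h : {0,1} → ℂ defined by h(x) = Σ f(σ), the sum over all σ ∈ {0,1}^n with σ_i = x and σ_j = σ_k for each pair {j,k} of the partition, satisfies h(u_i) = f(u) and h(1 − u_i) = f(ū); in particular h(0)·h(1) ≠ 0. -/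
open scoped BigOperators

lemma pairing_helper (m a : ℕ) (u : Fin (2 * m + 1) → Bool) (i : Fin (2 * m + 1))
    (hi : u i = true)
    (hcard : (Finset.univ.filter fun j => u j = true).card = 2 * a + 1) :
    ∃ E : Fin m × Bool ≃ {j : Fin (2 * m + 1) // j ≠ i},
      ∀ l, u (E (l, false)).1 = u (E (l, true)).1 := by
  classical
  set A := (Finset.univ.filter fun j => u j = true).erase i with hAdef
  set B := Finset.univ.filter fun j => u j = false with hBdef
  have hiT : i ∈ Finset.univ.filter fun j => u j = true := by simp [hi]
  have hA : A.card = 2 * a := by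
    rw [hAdef, Finset.card_erase_of_mem hiT, hcard]; omega
  have ha : a ≤ m := by
    have := (Finset.card_filter_le Finset.univ fun j => u j = true)
    simp only [hcard, Finset.card_univ, Fintype.card_fin] at this; omega
  have hB : B.card = 2 * (m - a) := by
    have hsum := Finset.card_filter_add_card_filter_not
      (s := (Finset.univ : Finset (Fin (2 * m + 1)))) (p := fun j => u j = true)
    have hBeq : B = Finset.univ.filter fun j => ¬(u j = true) := by
      apply Finset.filter_congr; intro j _; simp
    rw [hBeq]
    simp only [Finset.card_univ, Fintype.card_fin, hcard] at hsum ⊢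
    omega
  have hAmem : ∀ j ∈ A, u j = true ∧ j ≠ i := by
    intro j hj
    rw [hAdef] at hj
    exact ⟨(Finset.mem_filter.1 (Finset.mem_of_mem_erase hj)).2, Finset.ne_of_mem_erase hj⟩
  have hBmem : ∀ j ∈ B, u j = false ∧ j ≠ i := by
    intro j hj
    rw [hBdef, Finset.mem_filter] at hj
    refine ⟨hj.2, fun h => ?_⟩
    rw [h, hi] at hj; simp at hj
  have ecA : Fintype.card ↥A = 2 * a := by rw [Fintype.card_coe, hA]
  have ecB : Fintype.card ↥B = 2 * (m - a) := by rw [Fintype.card_coe, hB]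
  let eA : Fin (2 * a) ≃ ↥A := (Fintype.equivFinOfCardEq ecA).symm
  let eB : Fin (2 * (m - a)) ≃ ↥B := (Fintype.equivFinOfCardEq ecB).symm
  let g : Fin m × Bool → {j : Fin (2 * m + 1) // j ≠ i} := fun lb =>
    if h : (lb.1 : ℕ) < a then
      ⟨(eA ⟨2 * (lb.1 : ℕ) + lb.2.toNat, by
        have hb : lb.2.toNat ≤ 1 := by cases lb.2 <;> simp
        omega⟩).1, (hAmem _ (eA _).2).2⟩
    else
      ⟨(eB ⟨2 * ((lb.1 : ℕ) - a) + lb.2.toNat, by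
        have hb : lb.2.toNat ≤ 1 := by cases lb.2 <;> simp
        have h2 : (lb.1 : ℕ) < m := lb.1.isLt
        omega⟩).1, (hBmem _ (eB _).2).2⟩
  have hgu : ∀ lb, u (g lb).1 = if (lb.1 : ℕ) < a then true else false := by
    intro lb
    by_cases h : (lb.1 : ℕ) < a
    · simp only [g, dif_pos h, if_pos h]
      exact (hAmem _ (eA _).2).1
    · simp only [g, dif_neg h, if_neg h]
      exact (hBmem _ (eB _).2).1
  have hginj : Function.Injective g := by
    rintro ⟨x1, x2⟩ ⟨y1, y2⟩ hxy
    by_cases hx : (x1 : ℕ) < a <;> by_cases hy : (y1 : ℕ) < a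
    · simp only [g, dif_pos hx, dif_pos hy] at hxy
      have h1 := congrArg Subtype.val hxy
      have h2 := eA.injective (Subtype.ext h1)
      have h3 : 2 * (x1 : ℕ) + x2.toNat = 2 * (y1 : ℕ) + y2.toNat :=
        congrArg Fin.val h2
      cases x2 <;> cases y2 <;>
        simp only [Bool.toNat_false, Bool.toNat_true] at h3 <;>
        first
          | (exact absurd h3 (by omega))
          | (rw [show x1 = y1 from Fin.ext (by omega)])
    · have e1 := hgu (x1, x2); have e2 := hgu (y1, y2)
      rw [hxy] at e1; rw [e2] at e1
      simp [hx, hy] at e1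
    · have e1 := hgu (x1, x2); have e2 := hgu (y1, y2)
      rw [hxy] at e1; rw [e2] at e1
      simp [hx, hy] at e1
    · simp only [g, dif_neg hx, dif_neg hy] at hxy
      have h1 := congrArg Subtype.val hxy
      have h2 := eB.injective (Subtype.ext h1)
      have h3 : 2 * ((x1 : ℕ) - a) + x2.toNat = 2 * ((y1 : ℕ) - a) + y2.toNat :=
        congrArg Fin.val h2
      have hx1 : (x1 : ℕ) < m := x1.isLt
      have hy1 : (y1 : ℕ) < m := y1.isLt
      cases x2 <;> cases y2 <;>
        simp only [Bool.toNat_false, Bool.toNat_true] at h3 <;>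
        first
          | (exact absurd h3 (by omega))
          | (rw [show x1 = y1 from Fin.ext (by omega)])
  have hcards : Fintype.card (Fin m × Bool) = Fintype.card {j : Fin (2 * m + 1) // j ≠ i} := by
    have h1 : Fintype.card {j : Fin (2 * m + 1) // j ≠ i} = 2 * m := by
      simp [Fintype.card_subtype_compl, Fintype.card_subtype_eq]
    rw [h1, Fintype.card_prod, Fintype.card_fin, Fintype.card_bool]
    omega
  have hgbij : Function.Bijective g :=
    (Fintype.bijective_iff_injective_and_card g).2 ⟨hginj, hcards⟩
  refine ⟨Equiv.ofBijective g hgbij, fun l => ?_⟩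
  show u (g (l, false)).1 = u (g (l, true)).1
  rw [hgu (l, false), hgu (l, true)]

lemma pairing_exists (m : ℕ) (u : Fin (2 * m + 1) → Bool) :
    ∃ (i : Fin (2 * m + 1)) (E : Fin m × Bool ≃ {j : Fin (2 * m + 1) // j ≠ i}),
      ∀ l, u (E (l, false)).1 = u (E (l, true)).1 := by
  classical
  have hsum := Finset.card_filter_add_card_filter_not
    (s := (Finset.univ : Finset (Fin (2 * m + 1)))) (p := fun j => u j = true)
  simp only [Finset.card_univ, Fintype.card_fin] at hsum
  rcases Nat.even_or_odd (Finset.univ.filter fun j => u j = true).card with he | ho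
  · set u' : Fin (2 * m + 1) → Bool := fun j => !(u j) with hu'
    have heq : (Finset.univ.filter fun j => u' j = true) =
        (Finset.univ.filter fun j => ¬(u j = true)) := by
      apply Finset.filter_congr; intro j _; simp [hu']
    obtain ⟨t, ht⟩ := he
    have hle : t ≤ m := by omega
    have hodd : (Finset.univ.filter fun j => u' j = true).card = 2 * (m - t) + 1 := by
      rw [heq]; omega
    have hpos : 0 < (Finset.univ.filter fun j => u' j = true).card := by omega
    obtain ⟨i, hi⟩ := Finset.card_pos.1 hpos
    have hi' : u' i = true := (Finset.mem_filter.1 hi).2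
    obtain ⟨E, hE⟩ := pairing_helper m (m - t) u' i hi' hodd
    exact ⟨i, E, fun l => Bool.not_inj (hE l)⟩
  · obtain ⟨t, ht⟩ := ho
    have hpos : 0 < (Finset.univ.filter fun j => u j = true).card := by omega
    obtain ⟨i, hi⟩ := Finset.card_pos.1 hpos
    have hi' : u i = true := (Finset.mem_filter.1 hi).2
    obtain ⟨E, hE⟩ := pairing_helper m t u i hi' ht
    exact ⟨i, E, hE⟩

/-- Let `n = 2m+1` be odd and let `f : {0,1}ⁿ → ℂ` have support
exactly `{u, ū}`. Then there are an index `i` and a partition of `[n] ∖ {i}` into `m`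
pairs `{j,k}` with `u_j = u_k`, such that the unary function `h` obtained by summing
`f` over assignments pinned to `x` at `i` and constant on each pair satisfies
`h(u_i) = f(u)` and `h(1−u_i) = f(ū)`; in particular `h(0)·h(1) ≠ 0`. -/
theorem odd_support_pair_realizes_unary (m : ℕ)
    (f : (Fin (2 * m + 1) → Bool) → ℂ) (u : Fin (2 * m + 1) → Bool)
    (hu : f u ≠ 0) (hub : f (fun j => !(u j)) ≠ 0)
    (hsupp : ∀ x, x ≠ u → x ≠ (fun j => !(u j)) → f x = 0) :
    ∃ (i : Fin (2 * m + 1)) (p : Fin m → Fin (2 * m + 1) × Fin (2 * m + 1)),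
      (∀ l, u (p l).1 = u (p l).2) ∧
      (∀ l, (p l).1 ≠ i ∧ (p l).2 ≠ i) ∧
      Function.Injective
        (fun lb : Fin m × Bool => if lb.2 then (p lb.1).2 else (p lb.1).1) ∧
      (∀ j, j ≠ i → ∃ lb : Fin m × Bool,
        (if lb.2 then (p lb.1).2 else (p lb.1).1) = j) ∧
      ∃ h : Bool → ℂ,
        (∀ x : Bool, h x =
          ∑ σ : Fin (2 * m + 1) → Bool,
            if σ i = x ∧ ∀ l, σ (p l).1 = σ (p l).2 then f σ else 0) ∧
        h (u i) = f u ∧ h (!(u i)) = f (fun j => !(u j)) ∧ h false * h true ≠ 0 := by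
  classical
  obtain ⟨i, E, hE⟩ := pairing_exists m u
  set p : Fin m → Fin (2 * m + 1) × Fin (2 * m + 1) :=
    fun l => ((E (l, false)).1, (E (l, true)).1) with hp
  have hF : ∀ lb : Fin m × Bool,
      (if lb.2 then (p lb.1).2 else (p lb.1).1) = (E lb).1 := by
    rintro ⟨l, b⟩; cases b <;> rfl
  have hune : u ≠ (fun j => !(u j)) := by
    intro h
    have := congrFun h i
    simp at this
  refine ⟨i, p, fun l => hE l, fun l => ⟨(E (l, false)).2, (E (l, true)).2⟩, ?_, ?_, ?_⟩
  · intro x y hxy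
    simp only [hF] at hxy
    exact E.injective (Subtype.ext hxy)
  · intro j hj
    refine ⟨E.symm ⟨j, hj⟩, ?_⟩
    rw [hF (E.symm ⟨j, hj⟩), E.apply_symm_apply]
  · refine ⟨fun x => if x = u i then f u else f (fun j => !(u j)), ?_, ?_, ?_, ?_⟩
    · intro x
      have hzero : ∀ σ ∈ (Finset.univ : Finset (Fin (2 * m + 1) → Bool)),
          σ ∉ ({u, fun j => !(u j)} : Finset (Fin (2 * m + 1) → Bool)) →
          (if σ i = x ∧ ∀ l, σ (p l).1 = σ (p l).2 then f σ else 0) = 0 := by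
        intro σ _ hσ
        simp only [Finset.mem_insert, Finset.mem_singleton, not_or] at hσ
        split
        · exact hsupp σ hσ.1 hσ.2
        · rfl
      rw [← Finset.sum_subset (Finset.subset_univ _) hzero, Finset.sum_pair hune]
      have c1 : (u i = x ∧ ∀ l, u (p l).1 = u (p l).2) ↔ (u i = x) :=
        and_iff_left (fun l => hE l)
      have c2 : ((fun j => !(u j)) i = x ∧
          ∀ l, (fun j => !(u j)) (p l).1 = (fun j => !(u j)) (p l).2) ↔ ((!(u i)) = x) := by
        simp only
        exact and_iff_left (fun l => by rw [hE l])
      rw [if_congr c1 rfl rfl, if_congr c2 rfl rfl]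
      cases x <;> cases hui : u i <;> simp [hui]
    · simp
    · simp
    · cases hui : u i <;> simp [hui] <;>
        [exact ⟨hu, hub⟩; exact ⟨hub, hu⟩]
end

section
/- Let f : {0,1}^n → ℂ be a signature whose support contains an element of even Hamming weight and an element of odd Hamming weight. Then there exist a subset S ⊆ [n] with |[n] ∖ S| odd, an assignment c ∈ {0,1}^S, and an element w ∈ {0,1}^{[n]∖S}, such that the pinned function g : {0,1}^{[n]∖S} → ℂ defined by g(y) = f(σ), where σ agrees with c on S and with y on [n] ∖ S, has support exactly {w, w̄} (w̄ the bitwise complement of w); in particular g(w) ≠ 0 and g(w̄) ≠ 0. -/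
open scoped BigOperators

/-- The Hamming weight of `x ∈ {0,1}ⁿ`. -/
def hammingWeight {n : ℕ} (x : Fin n → Bool) : ℕ :=
  (Finset.univ.filter fun i => x i = true).card

lemma hw_add_hw {n : ℕ} (x y : Fin n → Bool) :
    hammingWeight x + hammingWeight y =
      (Finset.univ.filter fun i => x i ≠ y i).card +
      2 * ((Finset.univ.filter fun i => x i = true) ∩
           (Finset.univ.filter fun i => y i = true)).card := by
  classical
  set A := Finset.univ.filter fun i : Fin n => x i = true with hA
  set B := Finset.univ.filter fun i : Fin n => y i = true with hB
  have hfilter : (Finset.univ.filter fun i => x i ≠ y i) = (A ∪ B) \ (A ∩ B) := by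
    ext i
    simp only [Finset.mem_filter, Finset.mem_sdiff, Finset.mem_union, Finset.mem_inter,
      Finset.mem_univ, true_and, hA, hB]
    cases hx : x i <;> cases hy : y i <;> simp
  have hsub : A ∩ B ⊆ A ∪ B := (Finset.inter_subset_left).trans Finset.subset_union_left
  have hcard : ((A ∪ B) \ (A ∩ B)).card = (A ∪ B).card - (A ∩ B).card :=
    Finset.card_sdiff_of_subset hsub
  have hle : (A ∩ B).card ≤ (A ∪ B).card := Finset.card_le_card hsub
  have huni : (A ∪ B).card + (A ∩ B).card = A.card + B.card :=
    Finset.card_union_add_card_inter A B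
  have : hammingWeight x = A.card := rfl
  have : hammingWeight y = B.card := rfl
  rw [hfilter, hcard]
  show A.card + B.card = _
  omega

/-- If the support of `f : {0,1}ⁿ → ℂ` contains an element of even
Hamming weight and one of odd Hamming weight, then by pinning a subset `S` of the
coordinates (with `|[n]∖S|` odd) to constants one obtains a function `g` on the
remaining coordinates whose support is exactly `{w, w̄}` for some `w`. -/
theorem pin_to_antipodal_support {n : ℕ} (f : (Fin n → Bool) → ℂ)
    (heven : ∃ x, f x ≠ 0 ∧ Even (hammingWeight x))
    (hodd : ∃ x, f x ≠ 0 ∧ Odd (hammingWeight x)) :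
    ∃ (S : Finset (Fin n)) (c : Fin n → Bool) (w : {j : Fin n // j ∉ S} → Bool),
      Odd Sᶜ.card ∧
      ∃ g : ({j : Fin n // j ∉ S} → Bool) → ℂ,
        (∀ y, g y = f (fun j => if hj : j ∈ S then c j else y ⟨j, hj⟩)) ∧
        g w ≠ 0 ∧ g (fun j => !(w j)) ≠ 0 ∧
        ∀ y, y ≠ w → y ≠ (fun j => !(w j)) → g y = 0 := by
  classical
  obtain ⟨x₀, hx₀, hex₀⟩ := heven
  obtain ⟨y₀, hy₀, hoy₀⟩ := hodd
  set dist : (Fin n → Bool) → (Fin n → Bool) → ℕ :=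
    fun a b => (Finset.univ.filter fun i => a i ≠ b i).card with hdistdef
  have hdist_odd : ∀ a b : Fin n → Bool, Even (hammingWeight a) → Odd (hammingWeight b) →
      Odd (dist a b) := by
    intro a b ha hb
    have h1 := hw_add_hw a b
    have h2 : dist a b = (Finset.univ.filter fun i => a i ≠ b i).card := rfl
    rw [Nat.even_iff] at ha; rw [Nat.odd_iff] at hb ⊢
    omega
  set T : Finset ((Fin n → Bool) × (Fin n → Bool)) :=
    Finset.univ.filter fun p => f p.1 ≠ 0 ∧ f p.2 ≠ 0 ∧
      Even (hammingWeight p.1) ∧ Odd (hammingWeight p.2) with hT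
  have hmemT : (x₀, y₀) ∈ T := by
    simp only [hT, Finset.mem_filter, Finset.mem_univ, true_and]
    exact ⟨hx₀, hy₀, hex₀, hoy₀⟩
  obtain ⟨p, hpT, hmin⟩ := T.exists_min_image (fun p => dist p.1 p.2) ⟨_, hmemT⟩
  obtain ⟨x, y⟩ := p
  simp only [hT, Finset.mem_filter, Finset.mem_univ, true_and] at hpT
  obtain ⟨hx, hy, hex, hoy⟩ := hpT
  set S : Finset (Fin n) := Finset.univ.filter fun i => x i = y i with hS
  have hmemS : ∀ i, i ∈ S ↔ x i = y i := by
    intro i; simp [hS]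
  have hScard : Sᶜ.card = dist x y := by
    congr 1
    ext i
    simp [hS, hdistdef]
  refine ⟨S, x, fun j => x j, ?_, 
    (fun z => f (fun j => if hj : j ∈ S then x j else z ⟨j, hj⟩)), fun _ => rfl, ?_, ?_, ?_⟩
  · rw [hScard]; exact hdist_odd x y hex hoy
  · -- g w ≠ 0
    show f (fun j => if hj : j ∈ S then x j else x j) ≠ 0
    have : (fun j => if hj : j ∈ S then x j else x j) = x := by
      funext j; split <;> rfl
    rw [this]; exact hx
  · -- g w̄ ≠ 0
    have : (fun j => if hj : j ∈ S then x j else !(x j)) = y := by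
      funext j
      split
      · next hj => exact (hmemS j).1 hj
      · next hj =>
        have hxy : x j ≠ y j := fun h => hj ((hmemS j).2 h)
        cases hxj : x j <;> cases hyj : y j <;> simp_all
    show f (fun j => if hj : j ∈ S then x j else !(x j)) ≠ 0
    rw [this]; exact hy
  · -- other points vanish
    intro z hzw hzwbar
    by_contra hu
    set u : Fin n → Bool := fun j => if hj : j ∈ S then x j else z ⟨j, hj⟩ with hudef
    have huS : ∀ j (hj : j ∈ S), u j = x j := by
      intro j hj; simp [hudef, hj]
    have huSc : ∀ j (hj : j ∉ S), u j = z ⟨j, hj⟩ := by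
      intro j hj; simp [hudef, hj]
    rcases Nat.even_or_odd (hammingWeight u) with heu | hou
    · -- pair (u, y): dist u y < dist x y
      obtain ⟨j₀, hj₀⟩ := Function.ne_iff.mp hzw
      have hj₀S : (j₀ : Fin n) ∉ S := j₀.2
      have hxy₀ : x j₀ ≠ y j₀ := fun h => hj₀S ((hmemS _).2 h)
      have huy₀ : u j₀ = y j₀ := by
        have h1 : u (j₀ : Fin n) = z ⟨j₀, hj₀S⟩ := huSc _ hj₀S
        have h2 : z j₀ ≠ x (j₀ : Fin n) := hj₀
        rw [h1]
        cases hzj : z j₀ <;> cases hxj : x (j₀ : Fin n) <;>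
          cases hyj : y (j₀ : Fin n) <;> simp_all
      have hss : (Finset.univ.filter fun i => u i ≠ y i) ⊂
          (Finset.univ.filter fun i => x i ≠ y i) := by
        constructor
        · intro i hi
          simp only [Finset.mem_filter, Finset.mem_univ, true_and] at hi ⊢
          intro hxi
          exact hi (by rw [huS i ((hmemS i).2 hxi), hxi])
        · intro hcon
          have : (j₀ : Fin n) ∈ Finset.univ.filter fun i => u i ≠ y i :=
            hcon (by simp [hxy₀])
          simp only [Finset.mem_filter, Finset.mem_univ, true_and] at this
          exact this huy₀
      have hlt : dist u y < dist x y := Finset.card_lt_card hss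
      have : (u, y) ∈ T := by
        simp only [hT, Finset.mem_filter, Finset.mem_univ, true_and]
        exact ⟨hu, hy, heu, hoy⟩
      exact absurd (hmin _ this) (by simpa using hlt)
    · -- pair (x, u): dist x u < dist x y
      obtain ⟨j₀, hj₀⟩ := Function.ne_iff.mp hzwbar
      have hj₀S : (j₀ : Fin n) ∉ S := j₀.2
      have hxy₀ : x j₀ ≠ y j₀ := fun h => hj₀S ((hmemS _).2 h)
      have hux₀ : u j₀ = x j₀ := by
        have h1 : u (j₀ : Fin n) = z ⟨j₀, hj₀S⟩ := huSc _ hj₀S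
        have h2 : z j₀ ≠ !(x (j₀ : Fin n)) := hj₀
        rw [h1]
        cases hzj : z j₀ <;> cases hxj : x (j₀ : Fin n) <;> simp_all
      have hss : (Finset.univ.filter fun i => x i ≠ u i) ⊂
          (Finset.univ.filter fun i => x i ≠ y i) := by
        constructor
        · intro i hi
          simp only [Finset.mem_filter, Finset.mem_univ, true_and] at hi ⊢
          intro hxi
          exact hi ((huS i ((hmemS i).2 hxi)).symm)
        · intro hcon
          have : (j₀ : Fin n) ∈ Finset.univ.filter fun i => x i ≠ u i :=
            hcon (by simp [hxy₀])
          simp only [Finset.mem_filter, Finset.mem_univ, true_and] at this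
          exact this hux₀.symm
      have hlt : dist x u < dist x y := Finset.card_lt_card hss
      have : (x, u) ∈ T := by
        simp only [hT, Finset.mem_filter, Finset.mem_univ, true_and]
        exact ⟨hx, hu, hex, hou⟩
      exact absurd (hmin _ this) (by simpa using hlt)
end
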